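/- arXiv:1205.6507 — 8 statements merged into one kernel-verified Lean document; each statement's English description precedes it below -/
import Mathlib

section
/- Let K > 0, n ≥ 2, α > 0, and let φ solve φ'(t) = -2K(n-1) - (α/φ(t))K²(n-1) with φ(0) = 1. Then φ reaches 0 at the finite time T = 1/(2K(n-1)) + (α/(4(n-1)))·ln(αK/(2+αK)), and since αK/(2+αK) < 1, this T is strictly less than 1/(2K(n-1)), the extinction time for the Ricci flow (α = 0) case. -/
open Set

/-- For `K > 0`, `α > 0`, the RG-2 conformal factor reaches `0` at the finite time
`T = 1/(2K(n-1)) + (α/(4(n-1))) ln(αK/(2+αK))`, and since `αK/(2+αK) < 1` this `T` is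
strictly less than the Ricci flow extinction time `1/(2K(n-1))`. -/
theorem rg2_positive_curvature_extinction_time
    (K : ℝ) (n : ℕ) (α T : ℝ) (φ : ℝ → ℝ)
    (hK : 0 < K) (hn : 2 ≤ n) (hα : 0 < α)
    (hT : T = 1/(2*K*((n:ℝ)-1)) + (α/(4*((n:ℝ)-1))) * Real.log (α*K/(2+α*K)))
    (hφ0 : φ 0 = 1)
    (hcont : ContinuousOn φ (Icc 0 T))
    (hpos : ∀ t ∈ Ico (0:ℝ) T, 0 < φ t)
    (hode : ∀ t ∈ Ico (0:ℝ) T,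
      HasDerivAt φ (-2*K*((n:ℝ)-1) - (α/φ t)*K^2*((n:ℝ)-1)) t) :
    φ T = 0 ∧ α*K/(2+α*K) < 1 ∧ T < 1/(2*K*((n:ℝ)-1)) := by
  have hm : (1:ℝ) ≤ (n:ℝ) - 1 := by
    have : (2:ℝ) ≤ (n:ℝ) := by exact_mod_cast hn
    linarith
  set m : ℝ := (n:ℝ) - 1 with hmdef
  have hm0 : 0 < m := by linarith
  have ha : 0 < α * K := mul_pos hα hK
  have ha2 : 0 < 2 + α * K := by linarith
  have hlt1 : α*K/(2+α*K) < 1 := by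
    rw [div_lt_one ha2]; linarith
  have hlogneg : Real.log (α*K/(2+α*K)) < 0 :=
    Real.log_neg (div_pos ha ha2) hlt1
  have hTlt : T < 1/(2*K*m) := by
    rw [hT]
    have : (α/(4*m)) * Real.log (α*K/(2+α*K)) < 0 :=
      mul_neg_of_pos_of_neg (div_pos hα (by linarith)) hlogneg
    linarith
  -- T > 0
  have hlog_lt : Real.log ((2+α*K)/(α*K)) < 2/(α*K) := by
    have h1 : (2+α*K)/(α*K) = 1 + 2/(α*K) := by field_simp; ring
    rw [h1]
    have h2 : 0 < 2/(α*K) := by positivity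
    have := Real.log_lt_sub_one_of_pos (x := 1 + 2/(α*K)) (by linarith) (by linarith)
    linarith
  have hT0 : 0 < T := by
    rw [hT]
    have hlog_eq : Real.log (α*K/(2+α*K)) = - Real.log ((2+α*K)/(α*K)) := by
      rw [← Real.log_inv]; congr 1; field_simp
    rw [hlog_eq]
    have h2 : (α/(4*m)) * Real.log ((2+α*K)/(α*K)) < (α/(4*m)) * (2/(α*K)) :=
      mul_lt_mul_of_pos_left hlog_lt (by positivity)
    have h3 : (α/(4*m)) * (2/(α*K)) = 1/(2*K*m) := by
      field_simp; ring
    linarith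
  -- the antiderivative
  set F : ℝ → ℝ := fun y => (2*K*m)⁻¹ * (y - (α*K/2) * Real.log (2*y + α*K)) with hF
  have hFderiv : ∀ y : ℝ, 0 < 2*y + α*K →
      HasDerivAt F ((2*K*m)⁻¹ * (1 - (α*K/2) * (2/(2*y+α*K)))) y := by
    intro y hy
    have h1 : HasDerivAt (fun y : ℝ => 2*y + α*K) 2 y := by
      simpa using ((hasDerivAt_id y).const_mul 2).add_const (α*K)
    have h2 : HasDerivAt (fun y => Real.log (2*y+α*K)) (2/(2*y+α*K)) y := by
      simpa [div_eq_mul_inv, mul_comm, Function.comp_def] using (Real.hasDerivAt_log (ne_of_gt hy)).comp y h1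
    have h3 : HasDerivAt (fun y => y - (α*K/2) * Real.log (2*y+α*K))
        (1 - (α*K/2) * (2/(2*y+α*K))) y :=
      (hasDerivAt_id y).sub (h2.const_mul (α*K/2))
    simpa [hF] using h3.const_mul ((2*K*m)⁻¹)
  have hFcont : ContinuousOn F (Ici (0:ℝ)) := fun y hy =>
    ((hFderiv y (by simp only [mem_Ici] at hy; linarith)).continuousAt).continuousWithinAt
  -- φ T ≥ 0
  have hTIcc : T ∈ Icc (0:ℝ) T := right_mem_Icc.mpr hT0.le
  have hne : (nhdsWithin T (Ico (0:ℝ) T)).NeBot := by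
    apply mem_closure_iff_nhdsWithin_neBot.mp
    rw [closure_Ico (ne_of_gt hT0).symm]
    exact hTIcc
  have htend : Filter.Tendsto φ (nhdsWithin T (Ico (0:ℝ) T)) (nhds (φ T)) :=
    (hcont T hTIcc).mono Ico_subset_Icc_self
  have hφT0 : 0 ≤ φ T := by
    refine ge_of_tendsto htend ?_
    exact eventually_mem_nhdsWithin.mono (fun x hx => (hpos x hx).le)
  have hφnn : ∀ t ∈ Icc (0:ℝ) T, 0 ≤ φ t := by
    intro t ht
    rcases eq_or_lt_of_le ht.2 with h | h
    · rw [h]; exact hφT0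
    · exact (hpos t ⟨ht.1, h⟩).le
  -- F strictly monotone on [0, ∞)
  have hFmono : StrictMonoOn F (Ici (0:ℝ)) := by
    apply strictMonoOn_of_deriv_pos (convex_Ici 0) hFcont
    intro y hy
    rw [interior_Ici] at hy
    have hy' : (0:ℝ) < y := hy
    have h2y : 0 < 2*y + α*K := by linarith
    rw [(hFderiv y h2y).deriv]
    have heq : (α*K/2) * (2/(2*y+α*K)) = α*K/(2*y+α*K) := by
      field_simp
    have hlt : α*K/(2*y+α*K) < 1 := by
      rw [div_lt_one h2y]; linarith
    have : 0 < 1 - (α*K/2) * (2/(2*y+α*K)) := by rw [heq]; linarith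
    positivity
  -- the conserved quantity
  have key : ∀ y ∈ Icc (0:ℝ) T, F (φ y) = F 1 - y := by
    apply eq_of_has_deriv_right_eq (f' := fun _ => (-1:ℝ))
    · intro x hx
      have hx0 : 0 < φ x := hpos x hx
      have h2y : 0 < 2*φ x + α*K := by linarith
      have hc := (hFderiv (φ x) h2y).comp x (hode x hx)
      have heq : (2*K*m)⁻¹ * (1 - α*K/2 * (2/(2*φ x+α*K))) *
          (-2*K*m - α/φ x*K^2*m) = -1 := by
        field_simp
        ring
      rw [heq] at hc
      exact hc.hasDerivWithinAt
    · intro x _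
      simpa using ((hasDerivAt_id x).const_sub (F 1)).hasDerivWithinAt
        (s := Ici x)
    · exact hFcont.comp hcont (fun t ht => hφnn t ht)
    · exact (continuous_const.sub continuous_id).continuousOn
    · simp [hφ0]
  have hkeyT : F (φ T) = F 1 - T := key T hTIcc
  -- F 1 - T = F 0
  have hT' : F 1 - T = F 0 := by
    rw [hT, hF]
    have hlog : Real.log (α*K/(2+α*K)) = Real.log (α*K) - Real.log (2+α*K) :=
      Real.log_div ha.ne' ha2.ne'
    simp only [hlog]
    have h20 : (2:ℝ)*0 + α*K = α*K := by ring
    have h21 : (2:ℝ)*1 + α*K = 2 + α*K := by ring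
    rw [h20, h21]
    field_simp
    ring
  have hfin : F (φ T) = F 0 := by rw [hkeyT, hT']
  have hφT : φ T = 0 := hFmono.injOn hφT0 (le_refl (0:ℝ)) hfin
  exact ⟨hφT, hlt1, hTlt⟩
end

section
/- Let K < 0, n ≥ 2, α > 0, and let φ solve φ'(t) = -2K(n-1) - (α/φ(t))K²(n-1) with φ(0) = 1. If |K| < 2/α then φ'(0) > 0 and φ is strictly increasing for all t, and the solution exists for all t ≥ 0; if |K| > 2/α then φ'(0) < 0 and φ is strictly decreasing, reaching 0 in finite time. -/
open Set

open Filter Function Topology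

lemma rg2_caseA (c1 c2 : ℝ) (h2 : 0 < c2) (h12 : c2 < c1) :
    ∃ φ : ℝ → ℝ, φ 0 = 1 ∧ (∀ t : ℝ, 0 < φ t ∧ HasDerivAt φ (c1 - c2 / φ t) t) ∧
      StrictMono φ := by
  have hc1 : 0 < c1 := h2.trans h12
  set m : ℝ := c2 / c1 with hm_def
  have hm : 0 < m := div_pos h2 hc1
  have hm1 : m < 1 := (div_lt_one hc1).2 h12
  set G : ℝ → ℝ := fun y => y / c1 + (c2 / c1 ^ 2) * Real.log (c1 * y - c2) with hG_def
  have hden : ∀ y, m < y → 0 < c1 * y - c2 := by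
    intro y hy
    have : c2 < c1 * y := by
      rw [hm_def, div_lt_iff₀ hc1] at hy; linarith [hy]
    linarith
  have hG : ∀ y, m < y → HasDerivAt G (y / (c1 * y - c2)) y := by
    intro y hy
    have hpos := hden y hy
    have hA : HasDerivAt (fun y : ℝ => y / c1) (1 / c1) y := (hasDerivAt_id y).div_const c1
    have hB : HasDerivAt (fun y : ℝ => c1 * y - c2) c1 y := by
      simpa using ((hasDerivAt_id y).const_mul c1).sub_const c2
    have hC : HasDerivAt (fun y : ℝ => Real.log (c1 * y - c2)) (c1 / (c1 * y - c2)) y := by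
      simpa using hB.log hpos.ne'
    have hD := hA.add (hC.const_mul (c2 / c1 ^ 2))
    refine hD.congr_deriv ?_
    field_simp
    ring
  have hmono : StrictMonoOn G (Ioi m) := by
    apply strictMonoOn_of_deriv_pos (convex_Ioi m)
    · intro y hy; exact (hG y hy).continuousAt.continuousWithinAt
    · intro y hy
      rw [interior_Ioi] at hy
      rw [(hG y hy).deriv]
      exact div_pos (hm.trans hy) (hden y hy)
  -- surjectivity
  have htop : Tendsto G atTop atTop := by
    have t1 : Tendsto (fun y : ℝ => y / c1) atTop atTop := tendsto_id.atTop_div_const hc1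
    have t2 : Tendsto (fun y : ℝ => c1 * y - c2) atTop atTop := by
      have := tendsto_id.const_mul_atTop hc1 (f := fun y : ℝ => y) (l := atTop)
      exact tendsto_atTop_add_const_right atTop (-c2) this |>.congr (fun y => by ring)
    have t3 : Tendsto (fun y : ℝ => (c2 / c1 ^ 2) * Real.log (c1 * y - c2)) atTop atTop :=
      (Real.tendsto_log_atTop.comp t2).const_mul_atTop (div_pos h2 (by positivity))
    exact Filter.Tendsto.atTop_add_atTop t1 t3
  have hbot : Tendsto G (𝓝[>] m) atBot := by
    have h1 : Tendsto (fun y : ℝ => y / c1) (𝓝[>] m) (𝓝 (m / c1)) :=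
      ((continuous_id.div_const c1).continuousAt).continuousWithinAt.tendsto
    have h2' : Tendsto (fun y : ℝ => c1 * y - c2) (𝓝[>] m) (𝓝[>] 0) := by
      rw [tendsto_nhdsWithin_iff]
      constructor
      · have h0 : Tendsto (fun y : ℝ => c1 * y - c2) (𝓝 m) (𝓝 (c1 * m - c2)) :=
          ((continuous_const.mul continuous_id).sub continuous_const).continuousAt
        have hm0 : c1 * m - c2 = 0 := by rw [hm_def]; field_simp; ring
        rw [hm0] at h0
        exact h0.mono_left nhdsWithin_le_nhds
      · exact eventually_nhdsWithin_of_forall (fun y hy => hden y hy)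
    have h3 : Tendsto (fun y : ℝ => (c2 / c1 ^ 2) * Real.log (c1 * y - c2)) (𝓝[>] m) atBot := by
      apply Filter.Tendsto.const_mul_atBot (div_pos h2 (by positivity))
      exact Real.tendsto_log_nhdsGT_zero.comp h2'
    exact h1.add_atBot h3
  have hsurj : ∀ z : ℝ, ∃ y ∈ Ioi m, G y = z := by
    intro z
    obtain ⟨b, hbz, hbm⟩ := ((htop.eventually_ge_atTop z).and (eventually_gt_atTop m)).exists
    obtain ⟨a, haz, ham⟩ := ((hbot.eventually (eventually_le_atBot z)).and
      self_mem_nhdsWithin).exists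
    have hsub : uIcc a b ⊆ Ioi m := (ordConnected_Ioi).uIcc_subset ham hbm
    have hcont : ContinuousOn G (uIcc a b) := fun y hy =>
      (hG y (hsub hy)).continuousAt.continuousWithinAt
    have hz : z ∈ G '' uIcc a b := intermediate_value_uIcc hcont (Icc_subset_uIcc ⟨haz, hbz⟩)
    obtain ⟨y, hy, hyz⟩ := hz
    exact ⟨y, hsub hy, hyz⟩
  set Ginv : ℝ → ℝ := fun z => Function.invFunOn G (Ioi m) z with hGinv_def
  have hGG : ∀ z, G (Ginv z) = z := fun z => Function.invFunOn_eq (hsurj z)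
  have hmem : ∀ z, Ginv z ∈ Ioi m := fun z => Function.invFunOn_mem (hsurj z)
  have hGinv_mono : StrictMono Ginv := by
    intro a b hab
    exact (hmono.lt_iff_lt (hmem a) (hmem b)).1 (by rw [hGG, hGG]; exact hab)
  have hleft : ∀ y ∈ Ioi m, Ginv (G y) = y := fun y hy =>
    hmono.injOn (hmem (G y)) hy (hGG (G y))
  have hGinv_cont : ∀ z, ContinuousAt Ginv z := by
    intro z
    apply (hGinv_mono.strictMonoOn univ).continuousAt_of_image_mem_nhds univ_mem
    have him : Ginv '' univ = Ioi m := by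
      apply subset_antisymm
      · rintro _ ⟨w, -, rfl⟩; exact hmem w
      · intro y hy; exact ⟨G y, mem_univ _, hleft y hy⟩
    rw [him]
    exact isOpen_Ioi.mem_nhds (hmem z)
  have hGinv_deriv : ∀ z, HasDerivAt Ginv ((Ginv z / (c1 * Ginv z - c2))⁻¹) z := by
    intro z
    exact HasDerivAt.of_local_left_inverse (hGinv_cont z) (hG _ (hmem z))
      (ne_of_gt (div_pos (hm.trans (hmem z)) (hden _ (hmem z))))
      (Filter.Eventually.of_forall hGG)
  refine ⟨fun t => Ginv (t + G 1), ?_, ?_, ?_⟩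
  · simpa using hleft 1 hm1
  · intro t
    set y : ℝ := Ginv (t + G 1) with hy_def
    have hym : m < y := hmem _
    have hy0 : 0 < y := hm.trans hym
    refine ⟨hy0, ?_⟩
    have hinner : HasDerivAt (fun t : ℝ => t + G 1) 1 t := (hasDerivAt_id t).add_const _
    have := (hGinv_deriv (t + G 1)).comp t hinner
    refine this.congr_deriv ?_
    have hd := hden y hym
    show (y / (c1 * y - c2))⁻¹ * 1 = c1 - c2 / y
    field_simp
  · intro a b hab
    exact hGinv_mono (by simpa using hab)

lemma rg2_caseB (c1 c2 : ℝ) (h1 : 0 < c1) (h12 : c1 < c2) :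
    ∃ T > (0:ℝ), ∃ φ : ℝ → ℝ, φ 0 = 1 ∧ ContinuousOn φ (Icc 0 T) ∧
      (∀ t ∈ Ico (0:ℝ) T, 0 < φ t ∧ HasDerivAt φ (c1 - c2 / φ t) t) ∧
      StrictAntiOn φ (Icc (0:ℝ) T) ∧ φ T = 0 := by
  set m : ℝ := c2 / c1 with hm_def
  have hm1 : 1 < m := (one_lt_div h1).2 h12
  have hm : 0 < m := lt_trans one_pos hm1
  set h : ℝ → ℝ := fun y => -(y / c1) - (c2 / c1 ^ 2) * Real.log (c2 - c1 * y) with hh_def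
  have hden : ∀ y, y < m → 0 < c2 - c1 * y := by
    intro y hy
    have : c1 * y < c2 := by rw [hm_def, lt_div_iff₀ h1] at hy; linarith
    linarith
  have hh : ∀ y, y < m → HasDerivAt h (y / (c2 - c1 * y)) y := by
    intro y hy
    have hpos := hden y hy
    have hA : HasDerivAt (fun y : ℝ => -(y / c1)) (-(1 / c1)) y :=
      ((hasDerivAt_id y).div_const c1).neg
    have hB : HasDerivAt (fun y : ℝ => c2 - c1 * y) (-c1) y := by
      simpa using (((hasDerivAt_id y).const_mul c1).const_sub c2)
    have hC : HasDerivAt (fun y : ℝ => Real.log (c2 - c1 * y)) (-c1 / (c2 - c1 * y)) y := by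
      simpa using hB.log hpos.ne'
    have hD := hA.sub (hC.const_mul (c2 / c1 ^ 2))
    refine hD.congr_deriv ?_
    field_simp
    ring
  have hmono : StrictMonoOn h (Ico 0 m) := by
    apply strictMonoOn_of_deriv_pos (convex_Ico 0 m)
    · intro y hy; exact (hh y hy.2).continuousAt.continuousWithinAt
    · intro y hy
      rw [interior_Ico] at hy
      rw [(hh y hy.2).deriv]
      exact div_pos hy.1 (hden y hy.2)
  have h0m : (0:ℝ) ∈ Ico 0 m := ⟨le_refl 0, hm⟩
  have h1m : (1:ℝ) ∈ Ico 0 m := ⟨zero_le_one, hm1⟩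
  have hT : 0 < h 1 - h 0 := sub_pos.2 (hmono h0m h1m one_pos)
  -- tendsto atTop as y → m from the left
  have htop : Tendsto h (𝓝[<] m) atTop := by
    have hfin : Tendsto (fun y : ℝ => -(y / c1)) (𝓝[<] m) (𝓝 (-(m / c1))) :=
      ((continuous_id.div_const c1).neg.continuousAt).continuousWithinAt.tendsto
    have h2' : Tendsto (fun y : ℝ => c2 - c1 * y) (𝓝[<] m) (𝓝[>] 0) := by
      rw [tendsto_nhdsWithin_iff]
      constructor
      · have h0 : Tendsto (fun y : ℝ => c2 - c1 * y) (𝓝 m) (𝓝 (c2 - c1 * m)) :=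
          (continuous_const.sub (continuous_const.mul continuous_id)).continuousAt
        have hm0 : c2 - c1 * m = 0 := by rw [hm_def]; field_simp; ring
        rw [hm0] at h0
        exact h0.mono_left nhdsWithin_le_nhds
      · exact eventually_nhdsWithin_of_forall (fun y hy => hden y hy)
    have h3 : Tendsto (fun y : ℝ => (c2 / c1 ^ 2) * Real.log (c2 - c1 * y)) (𝓝[<] m) atBot := by
      apply Filter.Tendsto.const_mul_atBot (div_pos (h1.trans h12) (by positivity))
      exact Real.tendsto_log_nhdsGT_zero.comp h2'
    have h3' : Tendsto (fun y : ℝ => -((c2 / c1 ^ 2) * Real.log (c2 - c1 * y))) (𝓝[<] m) atTop :=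
      tendsto_neg_atBot_atTop.comp h3
    exact (hfin.add_atTop h3').congr (fun y => by ring)
  have hsurj : ∀ z ∈ Ici (h 0), ∃ y ∈ Ico 0 m, h y = z := by
    intro z hz
    obtain ⟨b, hbz, hb0, hbm⟩ := ((htop.eventually_ge_atTop z).and
      (Ioo_mem_nhdsLT_of_mem ⟨hm.trans_le (le_refl m), le_refl m⟩ :
        Ioo 0 m ∈ 𝓝[<] m)).exists
    have hcont : ContinuousOn h (Icc 0 b) := fun y hy =>
      (hh y (lt_of_le_of_lt hy.2 hbm)).continuousAt.continuousWithinAt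
    have hz' : z ∈ h '' Icc 0 b := intermediate_value_Icc hb0.le hcont ⟨hz, hbz⟩
    obtain ⟨y, hy, hyz⟩ := hz'
    exact ⟨y, ⟨hy.1, lt_of_le_of_lt hy.2 hbm⟩, hyz⟩
  set hinv : ℝ → ℝ := fun z => Function.invFunOn h (Ico 0 m) z with hinv_def
  have hHH : ∀ z ∈ Ici (h 0), h (hinv z) = z := fun z hz => Function.invFunOn_eq (hsurj z hz)
  have hmem : ∀ z ∈ Ici (h 0), hinv z ∈ Ico 0 m := fun z hz => Function.invFunOn_mem (hsurj z hz)
  have hleft : ∀ y ∈ Ico 0 m, hinv (h y) = y := fun y hy =>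
    hmono.injOn (hmem (h y) (hmono.monotoneOn h0m hy hy.1)) hy (hHH (h y) (hmono.monotoneOn h0m hy hy.1))
  have hinv_mono : StrictMonoOn hinv (Ici (h 0)) := by
    intro a ha b hb hab
    exact (hmono.lt_iff_lt (hmem a ha) (hmem b hb)).1 (by rw [hHH a ha, hHH b hb]; exact hab)
  have hinv_pos : ∀ z, h 0 < z → z ∈ Ici (h 0) → 0 < hinv z := by
    intro z hz hz'
    rcases (hmem z hz').1.lt_or_eq with h' | h'
    · exact h'
    · exfalso
      have := hHH z hz'
      rw [← h'] at this
      exact absurd this (ne_of_lt hz)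
  have himage : Ioo 0 m ⊆ hinv '' Ioi (h 0) := by
    intro y hy
    exact ⟨h y, hmono h0m ⟨hy.1.le, hy.2⟩ hy.1, hleft y ⟨hy.1.le, hy.2⟩⟩
  have hinv_cont : ∀ z, h 0 < z → ContinuousAt hinv z := by
    intro z hz
    apply (hinv_mono.mono (Ioi_subset_Ici le_rfl)).continuousAt_of_image_mem_nhds
      (isOpen_Ioi.mem_nhds hz)
    have hz' : z ∈ Ici (h 0) := le_of_lt hz
    exact mem_of_superset (Ioo_mem_nhds (hinv_pos z hz hz') (hmem z hz').2) himage
  have hinv_cwa : ContinuousWithinAt hinv (Ici (h 0)) (h 0) := by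
    apply hinv_mono.continuousWithinAt_right_of_exists_between self_mem_nhdsWithin
    intro b hb
    rw [hleft 0 h0m] at hb
    refine ⟨h (min b 1), hmono.monotoneOn h0m ⟨le_min hb.le zero_le_one, lt_of_le_of_lt (min_le_right b 1) hm1⟩ (le_min hb.le zero_le_one), ?_⟩
    rw [hleft (min b 1) ⟨le_min hb.le zero_le_one, lt_of_le_of_lt (min_le_right b 1) hm1⟩,
      hleft 0 h0m]
    exact ⟨lt_min hb one_pos, min_le_left b 1⟩
  refine ⟨h 1 - h 0, hT, fun t => hinv (h 1 - t), ?_, ?_, ?_, ?_, ?_⟩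
  · simpa using hleft 1 h1m
  · -- ContinuousOn on Icc 0 T
    intro t ht
    rcases lt_or_eq_of_le ht.2 with htT | htT
    · have hz : h 0 < h 1 - t := by linarith [ht.1]
      exact (ContinuousAt.comp (hinv_cont _ hz)
        ((continuous_const.sub continuous_id).continuousAt)).continuousWithinAt
    · -- t = T
      subst htT
      have hmaps : MapsTo (fun t : ℝ => h 1 - t) (Icc 0 (h 1 - h 0)) (Ici (h 0)) := by
        intro s hs; simp only [mem_Ici]; linarith [hs.2]
      have key : ContinuousWithinAt hinv (Ici (h 0)) ((fun t : ℝ => h 1 - t) (h 1 - h 0)) := by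
        have hgt : (fun t : ℝ => h 1 - t) (h 1 - h 0) = h 0 := by ring
        rw [hgt]; exact hinv_cwa
      exact key.comp (((continuous_const.sub continuous_id).continuousWithinAt) :
        ContinuousWithinAt (fun t : ℝ => h 1 - t) (Icc 0 (h 1 - h 0)) (h 1 - h 0)) hmaps
  · -- derivative on Ico 0 T
    intro t ht
    have hz : h 0 < h 1 - t := by linarith [ht.1, ht.2]
    have hz' : h 1 - t ∈ Ici (h 0) := le_of_lt hz
    set y : ℝ := hinv (h 1 - t) with hy_def
    have hy0 : 0 < y := hinv_pos _ hz hz'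
    have hym : y < m := (hmem _ hz').2
    refine ⟨hy0, ?_⟩
    have hfg : ∀ᶠ w in 𝓝 (h 1 - t), h (hinv w) = w := by
      filter_upwards [eventually_gt_nhds hz] with w hw
      exact hHH w (le_of_lt hw)
    have hdinv : HasDerivAt hinv ((y / (c2 - c1 * y))⁻¹) (h 1 - t) :=
      HasDerivAt.of_local_left_inverse (hinv_cont _ hz) (hh y hym)
        (ne_of_gt (div_pos hy0 (hden y hym))) hfg
    have hinner : HasDerivAt (fun t : ℝ => h 1 - t) (-1) t := by
      simpa using (hasDerivAt_id t).const_sub (h 1)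
    have := hdinv.comp t hinner
    refine this.congr_deriv ?_
    have hd := hden y hym
    show (y / (c2 - c1 * y))⁻¹ * -1 = c1 - c2 / y
    field_simp
    ring
  · -- StrictAntiOn
    intro t1 ht1 t2 ht2 h12'
    apply hinv_mono ?_ ?_ (by linarith)
    · simp only [mem_Ici]; linarith [ht2.2]
    · simp only [mem_Ici]; linarith [ht1.2]
  · show hinv (h 1 - (h 1 - h 0)) = 0
    rw [show h 1 - (h 1 - h 0) = h 0 from by ring]
    exact hleft 0 h0m
/-- For constant negative curvature `K < 0` under the RG-2 conformal factor ODE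
`φ' = -2K(n-1) - (α/φ)K²(n-1)`, `φ(0)=1`: if `|K| < 2/α` the initial derivative is
positive, and there is an immortal strictly increasing solution; if `|K| > 2/α` the
initial derivative is negative and the solution strictly decreases, reaching `0`
in finite time. -/
theorem rg2_negative_curvature_dichotomy
    (K : ℝ) (n : ℕ) (α : ℝ) (hK : K < 0) (hn : 2 ≤ n) (hα : 0 < α) :
    (|K| < 2/α →
      (0 < -2*K*((n:ℝ)-1) - α*K^2*((n:ℝ)-1)) ∧
      ∃ φ : ℝ → ℝ, φ 0 = 1 ∧
        (∀ t ∈ Ici (0:ℝ), 0 < φ t ∧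
          HasDerivAt φ (-2*K*((n:ℝ)-1) - (α/φ t)*K^2*((n:ℝ)-1)) t) ∧
        StrictMonoOn φ (Ici (0:ℝ))) ∧
    (2/α < |K| →
      (-2*K*((n:ℝ)-1) - α*K^2*((n:ℝ)-1) < 0) ∧
      ∃ T > (0:ℝ), ∃ φ : ℝ → ℝ, φ 0 = 1 ∧
        ContinuousOn φ (Icc 0 T) ∧
        (∀ t ∈ Ico (0:ℝ) T, 0 < φ t ∧
          HasDerivAt φ (-2*K*((n:ℝ)-1) - (α/φ t)*K^2*((n:ℝ)-1)) t) ∧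
        StrictAntiOn φ (Icc (0:ℝ) T) ∧ φ T = 0) := by
  have habs : |K| = -K := abs_of_neg hK
  have hn1 : (1:ℝ) ≤ (n:ℝ) - 1 := by
    have : (2:ℝ) ≤ (n:ℝ) := by exact_mod_cast hn
    linarith
  have hn1' : (0:ℝ) < (n:ℝ) - 1 := lt_of_lt_of_le one_pos hn1
  set c1 : ℝ := -2*K*((n:ℝ)-1) with hc1_def
  set c2 : ℝ := α*K^2*((n:ℝ)-1) with hc2_def
  have hc1 : 0 < c1 := by
    rw [hc1_def]; nlinarith
  have hc2 : 0 < c2 := by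
    rw [hc2_def]
    have hK2 : 0 < K^2 := by nlinarith
    exact mul_pos (mul_pos hα hK2) hn1'
  constructor
  · intro hlt
    rw [habs, lt_div_iff₀ hα] at hlt
    have hc21 : c2 < c1 := by
      rw [hc1_def, hc2_def]
      nlinarith
    refine ⟨by nlinarith, ?_⟩
    obtain ⟨φ, hφ0, hφd, hφm⟩ := rg2_caseA c1 c2 hc2 hc21
    refine ⟨φ, hφ0, ?_, hφm.strictMonoOn _⟩
    intro t _
    obtain ⟨hpos, hd⟩ := hφd t
    refine ⟨hpos, ?_⟩
    have heq : -2*K*((n:ℝ)-1) - (α/φ t)*K^2*((n:ℝ)-1) = c1 - c2 / φ t := by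
      rw [hc1_def, hc2_def]
      field_simp
    rw [heq]
    exact hd
  · intro hlt
    rw [habs, div_lt_iff₀ hα] at hlt
    have hc12 : c1 < c2 := by
      rw [hc1_def, hc2_def]
      nlinarith
    refine ⟨by nlinarith, ?_⟩
    obtain ⟨T, hT, φ, hφ0, hφc, hφd, hφa, hφT⟩ := rg2_caseB c1 c2 hc1 hc12
    refine ⟨T, hT, φ, hφ0, hφc, ?_, hφa, hφT⟩
    intro t ht
    obtain ⟨hpos, hd⟩ := hφd t ht
    refine ⟨hpos, ?_⟩
    have heq : -2*K*((n:ℝ)-1) - (α/φ t)*K^2*((n:ℝ)-1) = c1 - c2 / φ t := by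
      rw [hc1_def, hc2_def]
      field_simp
    rw [heq]
    exact hd
end

section
/- Consider the system A' = -(4A²B² + 2αA³)/B⁴, B' = (4AB² - 8B³ - 10αA² - 16αB² + 24αAB)/B³ for A, B > 0 and α ≥ 0. If A(t₀) = B(t₀) at some time t₀, then A(t) = B(t) for all t in the maximal interval of existence; i.e. the diagonal A = B is invariant under the flow. -/
open Set

/-- Auxiliary Grönwall-type lemma: if `D` satisfies `D' = g·D` on `[a,b]` with `g`
continuous and `D a = 0`, then `D b = 0`. -/
lemma rg2_gronwall_aux {D g : ℝ → ℝ} {a b : ℝ} (hab : a ≤ b)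
    (hcont : ContinuousOn D (Icc a b)) (hg : ContinuousOn g (Icc a b))
    (hderiv : ∀ s ∈ Icc a b, HasDerivAt D (g s * D s) s)
    (ha : D a = 0) : D b = 0 := by
  obtain ⟨C, hC⟩ := isCompact_Icc.exists_bound_of_continuousOn hg
  have h := norm_le_gronwallBound_of_norm_deriv_right_le (f := D)
      (f' := fun s => g s * D s) (δ := 0) (K := C) (ε := 0) (a := a) (b := b)
      hcont
      (fun x hx => (hderiv x (Ico_subset_Icc_self hx)).hasDerivWithinAt)
      (by simp [ha])
      (fun x hx => by
        have hCx := hC x (Ico_subset_Icc_self hx)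
        calc ‖g x * D x‖ = ‖g x‖ * ‖D x‖ := norm_mul _ _
          _ ≤ C * ‖D x‖ := mul_le_mul_of_nonneg_right hCx (norm_nonneg _)
          _ = C * ‖D x‖ + 0 := by ring)
  have hb := h b ⟨hab, le_refl b⟩
  rw [gronwallBound_ε0] at hb
  simp only [zero_mul] at hb
  exact norm_le_zero_iff.mp hb

/-- For the LRS SU(2) RG-2 system
`A' = -(4A²B² + 2αA³)/B⁴`, `B' = (4AB² - 8B³ - 10αA² - 16αB² + 24αAB)/B³`,
the diagonal `A = B` is invariant: if `A(t₀) = B(t₀)` then `A ≡ B` on the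
interval of existence. -/
theorem rg2_su2_diagonal_invariant
    (α : ℝ) (hα : 0 ≤ α) (A B : ℝ → ℝ) (I : Set ℝ) (hI : I.OrdConnected)
    (t₀ : ℝ) (ht₀ : t₀ ∈ I)
    (hsol : ∀ t ∈ I, 0 < A t ∧ 0 < B t ∧
      HasDerivAt A (-(4*(A t)^2*(B t)^2 + 2*α*(A t)^3)/(B t)^4) t ∧
      HasDerivAt B ((4*(A t)*(B t)^2 - 8*(B t)^3 - 10*α*(A t)^2
        - 16*α*(B t)^2 + 24*α*(A t)*(B t))/(B t)^3) t)
    (heq : A t₀ = B t₀) :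
    ∀ t ∈ I, A t = B t := by
  set g : ℝ → ℝ := fun s =>
    (-2*α*(A s)^2 + (8*α*(B s) - 4*(B s)^2)*(A s) - 8*(B s)^3 - 16*α*(B s)^2)
      / (B s)^4 with hg_def
  -- continuity of A and B on I
  have hAc : ContinuousOn A I := fun s hs =>
    ((hsol s hs).2.2.1.continuousAt).continuousWithinAt
  have hBc : ContinuousOn B I := fun s hs =>
    ((hsol s hs).2.2.2.continuousAt).continuousWithinAt
  have hgc : ContinuousOn g I := by
    apply ContinuousOn.div
    · fun_prop
    · fun_prop
    · intro s hs
      exact pow_ne_zero _ (ne_of_gt (hsol s hs).2.1)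
  -- the key derivative identity for the difference
  have key : ∀ t ∈ I, HasDerivAt (fun s => A s - B s) (g t * (A t - B t)) t := by
    intro t ht
    obtain ⟨hA, hB, hA', hB'⟩ := hsol t ht
    have hBne : B t ≠ 0 := ne_of_gt hB
    have hd : HasDerivAt (fun s => A s - B s) _ t := hA'.sub hB'
    convert hd using 1
    rw [hg_def]
    field_simp
    ring
  have hDc : ContinuousOn (fun s => A s - B s) I := hAc.sub hBc
  intro t ht
  rcases le_total t₀ t with hle | hle
  · -- forward in time
    have hIcc : Icc t₀ t ⊆ I := hI.out ht₀ ht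
    have h0 : (fun s => A s - B s) t = 0 :=
      rg2_gronwall_aux (D := fun s => A s - B s) (g := g) hle (hDc.mono hIcc)
        (hgc.mono hIcc) (fun s hs => key s (hIcc hs)) (by simp [heq])
    simp only at h0
    linarith
  · -- backward in time: reverse time
    have hIcc : Icc t t₀ ⊆ I := hI.out ht ht₀
    have hle' : t₀ ≤ 2*t₀ - t := by linarith
    have hmem : ∀ s ∈ Icc t₀ (2*t₀ - t), (2*t₀ - s) ∈ Icc t t₀ := by
      intro s hs
      exact ⟨by linarith [hs.2], by linarith [hs.1]⟩
    have hφ : Continuous (fun s : ℝ => 2*t₀ - s) := by continuity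
    have hE : ContinuousOn (fun s => A (2*t₀ - s) - B (2*t₀ - s)) (Icc t₀ (2*t₀ - t)) :=
      (hDc.mono hIcc).comp hφ.continuousOn hmem
    have hgE : ContinuousOn (fun s => -g (2*t₀ - s)) (Icc t₀ (2*t₀ - t)) :=
      (((hgc.mono hIcc).comp hφ.continuousOn hmem)).neg
    have hEderiv : ∀ s ∈ Icc t₀ (2*t₀ - t),
        HasDerivAt (fun s => A (2*t₀ - s) - B (2*t₀ - s))
          ((-g (2*t₀ - s)) * (A (2*t₀ - s) - B (2*t₀ - s))) s := by
      intro s hs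
      have hin : (2*t₀ - s) ∈ I := hIcc (hmem s hs)
      have h1 : HasDerivAt (fun s : ℝ => 2*t₀ - s) (-1) s := by
        simpa using (hasDerivAt_id s).const_sub (2*t₀)
      have h2 : HasDerivAt (fun s => A (2*t₀ - s) - B (2*t₀ - s)) _ s :=
        (key (2*t₀ - s) hin).comp s h1
      convert h2 using 1
      ring
    have h0 := rg2_gronwall_aux hle' hE hgE hEderiv
      (by have h2 : 2*t₀ - t₀ = t₀ := by ring
          rw [h2, heq]; ring)
    have ht' : (2*t₀ - (2*t₀ - t)) = t := by ring
    rw [ht'] at h0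
    linarith
end

section
/- For α > 0, the function B(A) = √(3α/2)·A^{1/2} solves the trajectory ODE dB/dA = B(5αA - 2B²)/(A(2B² + αA)) for A > 0. -/
/-- For `α > 0`, the parabola `B(A) = √(3α/2)·A^{1/2}` solves the LRS Nil RG-2
trajectory ODE `dB/dA = B(5αA - 2B²)/(A(2B² + αA))` for `A > 0`. -/
theorem rg2_nil_invariant_parabola (α : ℝ) (hα : 0 < α) (A : ℝ) (hA : 0 < A) :
    HasDerivAt (fun x : ℝ => Real.sqrt (3*α/2) * Real.sqrt x)
      ((Real.sqrt (3*α/2) * Real.sqrt A)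
        * (5*α*A - 2*(Real.sqrt (3*α/2) * Real.sqrt A)^2)
        / (A*(2*(Real.sqrt (3*α/2) * Real.sqrt A)^2 + α*A))) A := by
  have h1 := (Real.hasDerivAt_sqrt (ne_of_gt hA)).const_mul (Real.sqrt (3*α/2))
  convert h1 using 1
  case e'_4 => rfl
  case e'_5 => rfl
  have hs : Real.sqrt A ^ 2 = A := Real.sq_sqrt hA.le
  have hc : Real.sqrt (3*α/2) ^ 2 = 3*α/2 := Real.sq_sqrt (by positivity)
  have hsA : Real.sqrt A ≠ 0 := by positivity
  set c := Real.sqrt (3*α/2) with hcdef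
  rw [mul_pow, hc, hs]
  rw [show 5*α*A - 2*(3*α/2*A) = 2*α*A by ring, show A*(2*(3*α/2*A)+α*A) = 4*α*A^2 by ring]
  rw [← hs]
  field_simp
  linear_combination 4*c*Real.sq_sqrt (sq_nonneg (Real.sqrt A))
end

section
/- Let α > 0 and consider the RG-2 Nil system A' = -4A²/B² - 2αA³/B⁴, B' = 4A/B - 10αA²/B³ with A, B > 0. If B(t) = √(3α/2)·A(t)^{1/2} holds at time 0, it holds for all time, and then A satisfies A' = -(32/(9α))A, so A(t) = A₀e^{-32t/(9α)}; in particular the solution is immortal and (A(t), B(t)) → (0,0) exponentially as t → ∞. -/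
open Set Filter Topology

private lemma rg2_aux1 {α a b : ℝ} (hα : 0 < α) (ha : 0 < a) (hb : 0 < b)
    (hb2 : b^2 = 3*α/2 * a) :
    -4*a^2/b^2 - 2*α*a^3/b^4 = -(32/(9*α)) * a := by
  have hα' : α ≠ 0 := hα.ne'
  have ha' : a ≠ 0 := ha.ne'
  rw [show b^4 = (b^2)^2 by ring, hb2]
  field_simp
  ring

private lemma rg2_aux2 {α a b : ℝ} (hα : 0 < α) (ha : 0 < a) (hb : 0 < b)
    (hb2 : b^2 = 3*α/2 * a) :
    4*a/b - 10*α*a^2/b^3 = -(16/(9*α)) * b := by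
  have hα' : α ≠ 0 := hα.ne'
  have hb' : b ≠ 0 := hb.ne'
  have ha2 : a = 2/(3*α) * b^2 := by rw [hb2]; field_simp
  rw [ha2]
  field_simp
  ring

/-- For the LRS Nil RG-2 system `A' = -4A²/B² - 2αA³/B⁴`, `B' = 4A/B - 10αA²/B³`
with `α > 0`: if `B = √(3α/2)·√A` at time `0`, this holds for all time, and
`A' = -(32/(9α))A`, so `A(t) = A₀ e^{-32t/(9α)}`; moreover there is an immortal
solution of this form with `(A, B) → (0, 0)` as `t → ∞`. -/
theorem rg2_nil_parabola_solution
    (α A₀ T : ℝ) (hα : 0 < α) (hA₀ : 0 < A₀) (hT : 0 < T)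
    (A B : ℝ → ℝ) (hA0 : A 0 = A₀)
    (hB0 : B 0 = Real.sqrt (3*α/2) * Real.sqrt A₀)
    (hsol : ∀ t ∈ Ico (0:ℝ) T, 0 < A t ∧ 0 < B t ∧
      HasDerivAt A (-4*(A t)^2/(B t)^2 - 2*α*(A t)^3/(B t)^4) t ∧
      HasDerivAt B (4*(A t)/(B t) - 10*α*(A t)^2/(B t)^3) t) :
    (∀ t ∈ Ico (0:ℝ) T, B t = Real.sqrt (3*α/2) * Real.sqrt (A t) ∧
      HasDerivAt A (-(32/(9*α)) * A t) t ∧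
      A t = A₀ * Real.exp (-32*t/(9*α))) ∧
    (∃ A' B' : ℝ → ℝ, A' 0 = A₀ ∧ B' 0 = Real.sqrt (3*α/2) * Real.sqrt A₀ ∧
      (∀ t ∈ Ici (0:ℝ), 0 < A' t ∧ 0 < B' t ∧
        HasDerivAt A' (-4*(A' t)^2/(B' t)^2 - 2*α*(A' t)^3/(B' t)^4) t ∧
        HasDerivAt B' (4*(A' t)/(B' t) - 10*α*(A' t)^2/(B' t)^3) t ∧
        A' t = A₀ * Real.exp (-32*t/(9*α))) ∧
      Tendsto A' atTop (nhds 0) ∧ Tendsto B' atTop (nhds 0)) := by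
  have hα' : α ≠ 0 := hα.ne'
  -- the invariant parabola
  have key : ∀ t ∈ Ico (0:ℝ) T, (B t)^2 = 3*α/2 * A t := by
    intro t₁ ht₁
    set E : ℝ → ℝ := fun t => (B t)^2 - 3*α/2 * A t with hEdef
    set g : ℝ → ℝ := fun t => -2*(A t)*(α*A t - 4*(B t)^2)/(B t)^4 with hgdef
    have hE : ∀ t ∈ Ico (0:ℝ) T, HasDerivAt E (g t * E t) t := by
      intro t ht
      obtain ⟨hAp, hBp, hdA, hdB⟩ := hsol t ht
      have hBne : (B t) ≠ 0 := hBp.ne'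
      have h1 : HasDerivAt E
          (2 * B t ^ 1 * (4*(A t)/(B t) - 10*α*(A t)^2/(B t)^3)
            - 3*α/2 * (-4*(A t)^2/(B t)^2 - 2*α*(A t)^3/(B t)^4)) t :=
        (hdB.pow 2).sub (hdA.const_mul (3*α/2))
      convert h1 using 1
      simp only [hgdef, hEdef]
      field_simp
      ring
    have hsub : Icc (0:ℝ) t₁ ⊆ Ico 0 T := fun s hs => ⟨hs.1, lt_of_le_of_lt hs.2 ht₁.2⟩
    have hIcoSub : Ico (0:ℝ) t₁ ⊆ Ico 0 T := fun s hs => ⟨hs.1, hs.2.trans ht₁.2⟩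
    have hAc : ContinuousOn A (Icc 0 t₁) := fun s hs =>
      ((hsol s (hsub hs)).2.2.1.continuousAt).continuousWithinAt
    have hBc : ContinuousOn B (Icc 0 t₁) := fun s hs =>
      ((hsol s (hsub hs)).2.2.2.continuousAt).continuousWithinAt
    have hEc : ContinuousOn E (Icc 0 t₁) := by
      simp only [hEdef]
      exact (hBc.pow 2).sub (continuousOn_const.mul hAc)
    have hgc : ContinuousOn g (Icc 0 t₁) := by
      simp only [hgdef]
      apply ContinuousOn.div
      · exact (continuousOn_const.mul hAc).mul
          ((continuousOn_const.mul hAc).sub (continuousOn_const.mul (hBc.pow 2)))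
      · exact hBc.pow 4
      · intro s hs; exact pow_ne_zero _ (hsol s (hsub hs)).2.1.ne'
    obtain ⟨K, hK⟩ := isCompact_Icc.exists_bound_of_continuousOn hgc
    have hE0 : E 0 = 0 := by
      simp only [hEdef, hB0, hA0, mul_pow]
      rw [Real.sq_sqrt (by positivity), Real.sq_sqrt hA₀.le]
      ring
    have hbound := norm_le_gronwallBound_of_norm_deriv_right_le
      (f := E) (f' := fun t => g t * E t) (δ := 0) (K := K) (ε := 0) (a := 0) (b := t₁)
      hEc
      (fun s hs => (hE s (hIcoSub hs)).hasDerivWithinAt)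
      (by rw [hE0]; simp)
      (fun s hs => by
        rw [norm_mul, add_zero]
        exact mul_le_mul_of_nonneg_right (hK s (Ico_subset_Icc_self hs)) (norm_nonneg _))
      t₁ (right_mem_Icc.mpr ht₁.1)
    rw [sub_zero, gronwallBound_ε0_δ0] at hbound
    have : E t₁ = 0 := by
      have := norm_nonneg (E t₁)
      have : ‖E t₁‖ = 0 := le_antisymm hbound this
      simpa using this
    simp only [hEdef] at this
    linarith
  -- consequence: exact derivative of A
  have hdA' : ∀ t ∈ Ico (0:ℝ) T, HasDerivAt A (-(32/(9*α)) * A t) t := by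
    intro t ht
    obtain ⟨hAp, hBp, hdA, _⟩ := hsol t ht
    have := rg2_aux1 hα hAp hBp (key t ht)
    rw [← this]
    exact hdA
  -- closed formula for A
  have hAform : ∀ t ∈ Ico (0:ℝ) T, A t = A₀ * Real.exp (-32*t/(9*α)) := by
    intro t₁ ht₁
    set F : ℝ → ℝ := fun s => A s * Real.exp (32*s/(9*α)) with hFdef
    have hsub : Icc (0:ℝ) t₁ ⊆ Ico 0 T := fun s hs => ⟨hs.1, lt_of_le_of_lt hs.2 ht₁.2⟩
    have hIcoSub : Ico (0:ℝ) t₁ ⊆ Ico 0 T := fun s hs => ⟨hs.1, hs.2.trans ht₁.2⟩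
    have hAc : ContinuousOn A (Icc 0 t₁) := fun s hs =>
      ((hsol s (hsub hs)).2.2.1.continuousAt).continuousWithinAt
    have hFc : ContinuousOn F (Icc 0 t₁) := by
      simp only [hFdef]
      exact hAc.mul (Continuous.continuousOn (by continuity))
    have hFd : ∀ s ∈ Ico (0:ℝ) t₁, HasDerivWithinAt F 0 (Ici s) s := by
      intro s hs
      have h1 := hdA' s (hIcoSub hs)
      have hlin : HasDerivAt (fun u : ℝ => 32*u/(9*α)) (32/(9*α)) s := by
        simpa using ((hasDerivAt_id s).const_mul (32:ℝ)).div_const (9*α)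
      have h2 := hlin.exp
      have h3 := h1.mul h2
      have h4 : HasDerivAt F 0 s := by
        rw [hFdef]
        exact h3.congr_deriv (by ring)
      exact h4.hasDerivWithinAt
    have hconst := constant_of_has_deriv_right_zero hFc hFd t₁ (right_mem_Icc.mpr ht₁.1)
    have hF0 : F 0 = A₀ := by simp [hFdef, hA0]
    have hx : Real.exp (32*t₁/(9*α)) * Real.exp (-32*t₁/(9*α)) = 1 := by
      rw [← Real.exp_add, show 32*t₁/(9*α) + -32*t₁/(9*α) = 0 by ring, Real.exp_zero]
    calc A t₁ = A t₁ * (Real.exp (32*t₁/(9*α)) * Real.exp (-32*t₁/(9*α))) := by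
            rw [hx, mul_one]
      _ = F t₁ * Real.exp (-32*t₁/(9*α)) := by simp only [hFdef]; ring
      _ = A₀ * Real.exp (-32*t₁/(9*α)) := by rw [hconst, hF0]
  constructor
  · intro t ht
    obtain ⟨hAp, hBp, _, _⟩ := hsol t ht
    refine ⟨?_, hdA' t ht, hAform t ht⟩
    have h2 := key t ht
    have : B t = Real.sqrt ((B t)^2) := (Real.sqrt_sq hBp.le).symm
    rw [this, h2, Real.sqrt_mul (by positivity)]
  · refine ⟨fun t => A₀ * Real.exp (-32*t/(9*α)),
      fun t => Real.sqrt (3*α/2) * Real.sqrt A₀ * Real.exp (-16*t/(9*α)), by simp, by simp,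
      ?_, ?_, ?_⟩
    · intro t _
      have hApos : 0 < A₀ * Real.exp (-32*t/(9*α)) := by positivity
      have hBpos : 0 < Real.sqrt (3*α/2) * Real.sqrt A₀ * Real.exp (-16*t/(9*α)) := by
        have h1 : 0 < Real.sqrt (3*α/2) := Real.sqrt_pos.mpr (by positivity)
        have h2 : 0 < Real.sqrt A₀ := Real.sqrt_pos.mpr hA₀
        positivity
      have hB2 : (Real.sqrt (3*α/2) * Real.sqrt A₀ * Real.exp (-16*t/(9*α)))^2
          = 3*α/2 * (A₀ * Real.exp (-32*t/(9*α))) := by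
        have he : Real.exp (-16*t/(9*α))^2 = Real.exp (-32*t/(9*α)) := by
          rw [sq, ← Real.exp_add]
          congr 1
          ring
        rw [mul_pow, mul_pow, Real.sq_sqrt (by positivity), Real.sq_sqrt hA₀.le, he]
        ring
      have hdAf : HasDerivAt (fun t => A₀ * Real.exp (-32*t/(9*α)))
          (-(32/(9*α)) * (A₀ * Real.exp (-32*t/(9*α)))) t := by
        have hlin : HasDerivAt (fun u : ℝ => -32*u/(9*α)) (-32/(9*α)) t := by
          simpa using ((hasDerivAt_id t).const_mul (-32:ℝ)).div_const (9*α)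
        have := hlin.exp.const_mul A₀
        exact this.congr_deriv (by ring)
      have hdBf : HasDerivAt (fun t => Real.sqrt (3*α/2) * Real.sqrt A₀ * Real.exp (-16*t/(9*α)))
          (-(16/(9*α)) * (Real.sqrt (3*α/2) * Real.sqrt A₀ * Real.exp (-16*t/(9*α)))) t := by
        have hlin : HasDerivAt (fun u : ℝ => -16*u/(9*α)) (-16/(9*α)) t := by
          simpa using ((hasDerivAt_id t).const_mul (-16:ℝ)).div_const (9*α)
        have := hlin.exp.const_mul (Real.sqrt (3*α/2) * Real.sqrt A₀)
        exact this.congr_deriv (by ring)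
      refine ⟨hApos, hBpos, ?_, ?_, rfl⟩
      · rw [rg2_aux1 hα hApos hBpos hB2]; exact hdAf
      · rw [rg2_aux2 hα hApos hBpos hB2]; exact hdBf
    · have h1 : Tendsto (fun t : ℝ => -32*t/(9*α)) atTop atBot := by
        have h2 : Tendsto (fun t : ℝ => (32/(9*α)) * t) atTop atTop :=
          Tendsto.const_mul_atTop (by positivity) tendsto_id
        exact (tendsto_neg_atTop_atBot.comp h2).congr (fun t => by simp; ring)
      simpa using (Real.tendsto_exp_atBot.comp h1).const_mul A₀
    · have h1 : Tendsto (fun t : ℝ => -16*t/(9*α)) atTop atBot := by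
        have h2 : Tendsto (fun t : ℝ => (16/(9*α)) * t) atTop atTop :=
          Tendsto.const_mul_atTop (by positivity) tendsto_id
        exact (tendsto_neg_atTop_atBot.comp h2).congr (fun t => by simp; ring)
      simpa using (Real.tendsto_exp_atBot.comp h1).const_mul
        (Real.sqrt (3*α/2) * Real.sqrt A₀)
end

section
/- Consider the RG-2 Sol system A' = -16αA/B², B' = 8 - 16α/B with A, B > 0 and α > 0. Along any solution, the quantities A(t)(1 - 2α/B(t)) and B(t) - B₀ + 2α·ln|(B(t) - 2α)/(B₀ - 2α)| - 8t are conserved (the first constant in t, the second identically zero), provided B(t) ≠ 2α. -/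
open Set

/-- For the LRS Sol RG-2 system `A' = -16αA/B²`, `B' = 8 - 16α/B` with `B ≠ 2α`
along the flow, the quantity `A(1 - 2α/B)` is conserved and
`B(t) - B₀ + 2α ln|(B(t) - 2α)/(B₀ - 2α)| = 8t`. -/
theorem rg2_sol_first_integrals
    (α T : ℝ) (hα : 0 < α) (hT : 0 < T) (A B : ℝ → ℝ)
    (hsol : ∀ t ∈ Ico (0:ℝ) T, 0 < A t ∧ 0 < B t ∧
      HasDerivAt A (-16*α*(A t)/(B t)^2) t ∧
      HasDerivAt B (8 - 16*α/(B t)) t)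
    (hne : ∀ t ∈ Ico (0:ℝ) T, B t ≠ 2*α) :
    ∀ t ∈ Ico (0:ℝ) T,
      A t * (1 - 2*α/(B t)) = A 0 * (1 - 2*α/(B 0)) ∧
      B t - B 0 + 2*α * Real.log |(B t - 2*α)/(B 0 - 2*α)| = 8*t := by
  set F : ℝ → ℝ := fun s => A s * (1 - 2*α/(B s)) with hF
  set H : ℝ → ℝ := fun s => B s + 2*α * Real.log (B s - 2*α) with hH
  have hFderiv : ∀ s ∈ Ico (0:ℝ) T, HasDerivAt F 0 s := by
    intro s hs
    obtain ⟨hA, hB, hA', hB'⟩ := hsol s hs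
    have hBne : B s ≠ 0 := ne_of_gt hB
    have h1 : HasDerivAt (fun u => 2*α/(B u))
        ((0 * B s - 2*α*(8 - 16*α/(B s)))/(B s)^2) s :=
      (hasDerivAt_const s (2*α)).div hB' hBne
    have h2 : HasDerivAt (fun u => 1 - 2*α/(B u))
        (0 - (0 * B s - 2*α*(8 - 16*α/(B s)))/(B s)^2) s :=
      (hasDerivAt_const s (1:ℝ)).sub h1
    have h3 : HasDerivAt (fun u => A u * (1 - 2*α/(B u))) _ s := hA'.mul h2
    convert h3 using 1
    field_simp
    ring
  have hHderiv : ∀ s ∈ Ico (0:ℝ) T, HasDerivAt H 8 s := by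
    intro s hs
    obtain ⟨hA, hB, hA', hB'⟩ := hsol s hs
    have hBne : B s ≠ 0 := ne_of_gt hB
    have hB2 : B s - 2*α ≠ 0 := sub_ne_zero.mpr (hne s hs)
    have hlog : HasDerivAt (fun u => Real.log (B u - 2*α))
        ((B s - 2*α)⁻¹ * (8 - 16*α/(B s))) s :=
      by have := (Real.hasDerivAt_log hB2).comp s (hB'.sub_const (2*α)); exact this
    have h3 : HasDerivAt (fun u => B u + 2*α * Real.log (B u - 2*α)) _ s :=
      hB'.add (hlog.const_mul (2*α))
    convert h3 using 1
    field_simp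
    have hX : (B s - α*2)⁻¹ * (B s - α*2) = 1 := inv_mul_cancel₀ (by rwa [mul_comm] at hB2)
    linear_combination (-16*α) * hX
  intro t ht
  have hsub : Icc (0:ℝ) t ⊆ Ico 0 T := fun x hx =>
    ⟨hx.1, lt_of_le_of_lt hx.2 ht.2⟩
  have hsub' : Ico (0:ℝ) t ⊆ Ico 0 T := fun x hx =>
    ⟨hx.1, hx.2.trans ht.2⟩
  have hFcont : ContinuousOn F (Icc 0 t) := fun x hx =>
    ((hFderiv x (hsub hx)).continuousAt).continuousWithinAt
  have hHcont : ContinuousOn H (Icc 0 t) := fun x hx =>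
    ((hHderiv x (hsub hx)).continuousAt).continuousWithinAt
  have htmem : t ∈ Icc (0:ℝ) t := ⟨ht.1, le_rfl⟩
  constructor
  · have := eq_of_has_deriv_right_eq
      (f' := fun _ => (0:ℝ)) (g := fun _ => F 0)
      (fun x hx => (hFderiv x (hsub' hx)).hasDerivWithinAt)
      (fun x hx => (hasDerivAt_const x (F 0)).hasDerivWithinAt)
      hFcont continuousOn_const rfl t htmem
    exact this
  · have hg : ∀ x : ℝ, HasDerivAt (fun s => H 0 + 8*s) 8 x := by
      intro x
      simpa using ((hasDerivAt_id x).const_mul (8:ℝ)).const_add (H 0)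
    have hHt : H t = H 0 + 8*t := eq_of_has_deriv_right_eq
      (f' := fun _ => (8:ℝ)) (g := fun s => H 0 + 8*s)
      (fun x hx => (hHderiv x (hsub' hx)).hasDerivWithinAt)
      (fun x _ => (hg x).hasDerivWithinAt)
      hHcont ((continuous_const.add (continuous_const.mul continuous_id)).continuousOn)
      (by simp) t htmem
    have hBt2 : B t - 2*α ≠ 0 := sub_ne_zero.mpr (hne t ht)
    have hB02 : B 0 - 2*α ≠ 0 := sub_ne_zero.mpr (hne 0 ⟨le_rfl, hT⟩)
    rw [abs_div, Real.log_div (abs_ne_zero.mpr hBt2) (abs_ne_zero.mpr hB02),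
      Real.log_abs, Real.log_abs]
    have hHt' : B t + 2*α * Real.log (B t - 2*α)
        = (B 0 + 2*α * Real.log (B 0 - 2*α)) + 8*t := hHt
    linarith
end

section
/- Let α > 0 and let B solve B' = 8 - 16α/B with B(0) = B₀ > 2α. Then B is strictly increasing, exists for all t ≥ 0, and B(t) → ∞ as t → ∞; moreover A(t) := A₀(1 - 2α/B₀)/(1 - 2α/B(t)) solves A' = -16αA/B² and A(t) → A₀(1 - 2α/B₀) as t → ∞. -/
open Set Filter Topology

private noncomputable def solT (α B₀ b : ℝ) : ℝ :=
  (b - B₀)/8 + (α/4) * Real.log ((b - 2*α)/(B₀ - 2*α))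

private theorem solT_hasDerivAt (α B₀ : ℝ) (hα : 0 < α) (hB₀ : 2*α < B₀) {b : ℝ}
    (hb : 2*α < b) : HasDerivAt (solT α B₀) (b / (8*(b - 2*α))) b := by
  have hK : (0:ℝ) < B₀ - 2*α := by linarith
  have hbc : (0:ℝ) < b - 2*α := by linarith
  have h1 : HasDerivAt (fun y : ℝ => (y - B₀)/8) (1/8) b := by
    simpa using ((hasDerivAt_id b).sub_const B₀).div_const 8
  have h2 : HasDerivAt (fun y : ℝ => (y - 2*α)/(B₀ - 2*α)) (1/(B₀ - 2*α)) b := by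
    simpa using ((hasDerivAt_id b).sub_const (2*α)).div_const (B₀ - 2*α)
  have h3 := h2.log (ne_of_gt (div_pos hbc hK))
  have h4 := h1.add (h3.const_mul (α/4))
  refine h4.congr_deriv ?_
  have hKne : B₀ - 2*α ≠ 0 := ne_of_gt hK
  have hbne : b - 2*α ≠ 0 := ne_of_gt hbc
  rw [div_div_div_cancel_right₀ hKne, eq_div_iff (mul_ne_zero (by norm_num) hbne)]
  have e : 1/(b-2*α) * (8*(b-2*α)) = 8 := by rw [mul_left_comm, one_div_mul_cancel hbne, mul_one]
  rw [add_mul, mul_assoc, e]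
  ring

private theorem solT_exists_eq (α B₀ : ℝ) (hα : 0 < α) (hB₀ : 2*α < B₀) (t : ℝ) :
    ∃ b, 2*α < b ∧ solT α B₀ b = t := by
  have hK : (0:ℝ) < B₀ - 2*α := by linarith
  -- tendsto atBot as b → (2α)⁺
  have hbot : Tendsto (solT α B₀) (𝓝[>] (2*α)) atBot := by
    have hlin : Tendsto (fun b : ℝ => (b - B₀)/8) (𝓝[>] (2*α)) (𝓝 ((2*α - B₀)/8)) := by
      apply Tendsto.mono_left _ nhdsWithin_le_nhds
      exact ((continuous_id.sub continuous_const).div_const 8).tendsto _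
    have hinner : Tendsto (fun b : ℝ => (b - 2*α)/(B₀ - 2*α)) (𝓝[>] (2*α)) (𝓝[>] 0) := by
      rw [tendsto_nhdsWithin_iff]
      constructor
      · apply Tendsto.mono_left _ nhdsWithin_le_nhds
        have : Tendsto (fun b : ℝ => (b - 2*α)/(B₀ - 2*α)) (𝓝 (2*α)) (𝓝 ((2*α - 2*α)/(B₀-2*α))) :=
          ((continuous_id.sub continuous_const).div_const _).tendsto _
        simpa using this
      · filter_upwards [self_mem_nhdsWithin] with b hb
        exact div_pos (by linarith [mem_Ioi.mp hb]) hK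
    have hlog := Real.tendsto_log_nhdsGT_zero.comp hinner
    have hlog2 : Tendsto (fun b : ℝ => (α/4) * Real.log ((b - 2*α)/(B₀ - 2*α)))
        (𝓝[>] (2*α)) atBot := hlog.const_mul_atBot (by linarith)
    exact hlin.add_atBot hlog2
  have htop : Tendsto (solT α B₀) atTop atTop := by
    have hlin : Tendsto (fun b : ℝ => (b - B₀)/8) atTop atTop :=
      (tendsto_atTop_add_const_right _ _ tendsto_id).atTop_div_const (by norm_num)
    have hinner : Tendsto (fun b : ℝ => (b - 2*α)/(B₀ - 2*α)) atTop atTop :=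
      (tendsto_atTop_add_const_right _ _ tendsto_id).atTop_div_const hK
    have hlog := Real.tendsto_log_atTop.comp hinner
    exact Filter.Tendsto.atTop_add_atTop hlin (hlog.const_mul_atTop (by linarith))
  -- pick endpoints
  have h1 : ∀ᶠ b in 𝓝[>] (2*α), solT α B₀ b < t := hbot.eventually (eventually_lt_atBot t)
  obtain ⟨b₁, hb₁, hb₁mem⟩ := (h1.and self_mem_nhdsWithin).exists
  have h2 : ∀ᶠ b in atTop, t < solT α B₀ b ∧ b₁ ≤ b := by
    filter_upwards [htop.eventually (eventually_gt_atTop t), eventually_ge_atTop b₁] with b h h'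
    exact ⟨h, h'⟩
  obtain ⟨b₂, hb₂, hb₁₂⟩ := h2.exists
  have hb₁c : 2*α < b₁ := hb₁mem
  have hcont : ContinuousOn (solT α B₀) (Icc b₁ b₂) := fun x hx =>
    ((solT_hasDerivAt α B₀ hα hB₀ (lt_of_lt_of_le hb₁c hx.1)).continuousAt).continuousWithinAt
  have := intermediate_value_Icc hb₁₂ hcont
  have ht : t ∈ Icc (solT α B₀ b₁) (solT α B₀ b₂) := ⟨le_of_lt hb₁, le_of_lt hb₂⟩
  obtain ⟨b, hbmem, hbt⟩ := this ht
  exact ⟨b, lt_of_lt_of_le hb₁c hbmem.1, hbt⟩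

private theorem solT_strictMonoOn (α B₀ : ℝ) (hα : 0 < α) (hB₀ : 2*α < B₀) :
    StrictMonoOn (solT α B₀) (Ioi (2*α)) := by
  apply StrictMonoOn.mono (s := Ioi (2*α)) ?_ le_rfl
  apply strictMonoOn_of_deriv_pos (convex_Ioi _)
  · exact fun x hx => ((solT_hasDerivAt α B₀ hα hB₀ hx).continuousAt).continuousWithinAt
  · intro x hx
    rw [interior_Ioi] at hx
    rw [(solT_hasDerivAt α B₀ hα hB₀ hx).deriv]
    have hx' : (0:ℝ) < x := lt_trans (by linarith) hx
    exact div_pos hx' (by nlinarith [mem_Ioi.mp hx])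

private theorem exists_solB (α B₀ : ℝ) (hα : 0 < α) (hB₀ : 2*α < B₀) :
    ∃ B : ℝ → ℝ, B 0 = B₀ ∧ ∀ t : ℝ, 2*α < B t ∧ HasDerivAt B (8 - 16*α/(B t)) t := by
  have hK : (0:ℝ) < B₀ - 2*α := by linarith
  choose g hg1 hg2 using solT_exists_eq α B₀ hα hB₀
  have hmonoT := solT_strictMonoOn α B₀ hα hB₀
  have hginj : ∀ s t, g s = g t → s = t := fun s t h => by
    rw [← hg2 s, ← hg2 t, h]
  have hgmono : Monotone g := by
    intro s t hst
    rcases le_or_gt (g s) (g t) with h | h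
    · exact h
    · exfalso
      have := hmonoT (hg1 t) (hg1 s) h
      rw [hg2 s, hg2 t] at this; linarith
  have hgTB : ∀ b, 2*α < b → g (solT α B₀ b) = b := by
    intro b hb
    have h1 := hg2 (solT α B₀ b)
    exact hmonoT.injOn (hg1 _) hb h1
  have hrange : range g = Ioi (2*α) := by
    apply subset_antisymm
    · rintro _ ⟨t, rfl⟩; exact hg1 t
    · rintro b hb; exact ⟨solT α B₀ b, hgTB b hb⟩
  have hgcont : ∀ t, ContinuousAt g t := by
    intro t
    apply continuousAt_of_monotoneOn_of_image_mem_nhds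
      (fun x _ y _ hxy => hgmono hxy) univ_mem
    rw [image_univ, hrange]
    exact (isOpen_Ioi).mem_nhds (hg1 t)
  have hgderiv : ∀ t : ℝ, HasDerivAt g (8 - 16*α/(g t)) t := by
    intro t
    have hgt := hg1 t
    have hd := solT_hasDerivAt α B₀ hα hB₀ hgt
    have hne : g t / (8*(g t - 2*α)) ≠ 0 :=
      div_ne_zero (ne_of_gt (by linarith)) (ne_of_gt (by nlinarith))
    have h := hd.of_local_left_inverse (hgcont t) hne
      (Eventually.of_forall fun y => hg2 y)
    refine h.congr_deriv ?_
    rw [inv_div]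
    have h1 : g t ≠ 0 := ne_of_gt (by linarith)
    field_simp
    ring
  refine ⟨g, ?_, fun t => ⟨hg1 t, hgderiv t⟩⟩
  have : solT α B₀ B₀ = 0 := by
    simp [solT, div_self (ne_of_gt hK)]
  rw [← this, hgTB B₀ hB₀]

/-- For the LRS Sol RG-2 flow with `B₀ > 2α`: a global solution of
`B' = 8 - 16α/B`, `B(0) = B₀` exists; any such solution is strictly increasing
with `B(t) → ∞`, and `A(t) := A₀(1 - 2α/B₀)/(1 - 2α/B(t))` solves
`A' = -16αA/B²` with `A(t) → A₀(1 - 2α/B₀)` as `t → ∞`. -/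
theorem rg2_sol_expanding_case
    (α A₀ B₀ : ℝ) (hα : 0 < α) (hA₀ : 0 < A₀) (hB₀ : 2*α < B₀) :
    (∃ B : ℝ → ℝ, B 0 = B₀ ∧
      ∀ t ∈ Ici (0:ℝ), 0 < B t ∧ HasDerivAt B (8 - 16*α/(B t)) t) ∧
    (∀ B : ℝ → ℝ, B 0 = B₀ →
      (∀ t ∈ Ici (0:ℝ), 0 < B t ∧ HasDerivAt B (8 - 16*α/(B t)) t) →
      StrictMonoOn B (Ici (0:ℝ)) ∧
      Tendsto B atTop atTop ∧
      (∀ t ∈ Ici (0:ℝ),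
        HasDerivAt (fun s => A₀*(1 - 2*α/B₀)/(1 - 2*α/(B s)))
          (-16*α*(A₀*(1 - 2*α/B₀)/(1 - 2*α/(B t)))/(B t)^2) t) ∧
      Tendsto (fun t => A₀*(1 - 2*α/B₀)/(1 - 2*α/(B t))) atTop
        (nhds (A₀*(1 - 2*α/B₀)))) := by
  constructor
  · obtain ⟨B, hB0, hB⟩ := exists_solB α B₀ hα hB₀
    exact ⟨B, hB0, fun t _ => ⟨lt_trans (by linarith) (hB t).1, (hB t).2⟩⟩
  intro B hB0 hB
  have hctIci : ContinuousOn B (Ici 0) := fun t ht =>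
    ((hB t ht).2).continuousAt.continuousWithinAt
  -- barrier : B t > 2α on Ici 0
  have hgt : ∀ t ∈ Ici (0:ℝ), 2*α < B t := by
    by_contra h'
    push_neg at h'
    obtain ⟨t₀, ht₀, hle⟩ := h'
    set S := Icc (0:ℝ) t₀ ∩ B ⁻¹' (Iic (2*α)) with hS
    have hSne : S.Nonempty := ⟨t₀, ⟨ht₀, le_rfl⟩, hle⟩
    have hSbdd : BddBelow S := ⟨0, fun x hx => hx.1.1⟩
    have hSclosed : IsClosed S :=
      (hctIci.mono (Icc_subset_Ici_self)).preimage_isClosed_of_isClosed isClosed_Icc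
        isClosed_Iic
    set t₁ := sInf S with ht₁def
    have ht₁S : t₁ ∈ S := hSclosed.csInf_mem hSne hSbdd
    have ht₁0 : 0 ≤ t₁ := ht₁S.1.1
    have ht₁pos : 0 < t₁ := by
      rcases eq_or_lt_of_le ht₁0 with h | h
      · exfalso
        have : B t₁ ≤ 2*α := ht₁S.2
        rw [← h, hB0] at this; linarith
      · exact h
    have hbefore : ∀ s ∈ Ico (0:ℝ) t₁, 2*α < B s := by
      intro s hs
      by_contra hcon
      push_neg at hcon
      have : s ∈ S := ⟨⟨hs.1, le_trans hs.2.le ht₁S.1.2⟩, hcon⟩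
      exact absurd (csInf_le hSbdd this) (not_le.mpr hs.2)
    have hmono : StrictMonoOn B (Icc 0 t₁) := by
      apply strictMonoOn_of_deriv_pos (convex_Icc 0 t₁)
        (hctIci.mono (Icc_subset_Ici_self))
      intro x hx
      rw [interior_Icc] at hx
      have hx' : x ∈ Ici (0:ℝ) := le_of_lt hx.1
      rw [((hB x hx').2).deriv]
      have hBx := hbefore x ⟨le_of_lt hx.1, hx.2⟩
      have hBx0 : 0 < B x := by linarith
      have : 16*α/(B x) < 8 := by rw [div_lt_iff₀ hBx0]; linarith
      linarith
    have h01 : B 0 < B t₁ := hmono ⟨le_rfl, ht₁0⟩ ⟨ht₁0, le_rfl⟩ ht₁pos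
    have : B t₁ ≤ 2*α := ht₁S.2
    rw [hB0] at h01; linarith
  have hpos : ∀ t ∈ Ici (0:ℝ), 0 < B t := fun t ht => lt_trans (by linarith) (hgt t ht)
  -- strict monotonicity
  have hsm : StrictMonoOn B (Ici (0:ℝ)) := by
    apply strictMonoOn_of_deriv_pos (convex_Ici 0) hctIci
    intro x hx
    rw [interior_Ici] at hx
    have hx' : x ∈ Ici (0:ℝ) := mem_Ici.mpr (le_of_lt hx)
    rw [((hB x hx').2).deriv]
    have hBx := hgt x hx'
    have : 16*α/(B x) < 8 := by rw [div_lt_iff₀ (hpos x hx')]; linarith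
    linarith
  refine ⟨hsm, ?_, ?_, ?_⟩
  -- tendsto atTop
  · have hge : ∀ t ∈ Ici (0:ℝ), B₀ ≤ B t := by
      intro t ht
      rcases eq_or_lt_of_le (mem_Ici.mp ht) with h | h
      · rw [← h, hB0]
      · rw [← hB0]; exact (hsm (self_mem_Ici) ht h).le
    set δ := 8 - 16*α/B₀ with hδ
    have hδpos : 0 < δ := by
      have : 16*α/B₀ < 8 := by rw [div_lt_iff₀ (by linarith : (0:ℝ) < B₀)]; linarith
      simp only [hδ]; linarith
    have hmono2 : MonotoneOn (fun t => B t - δ * t) (Ici (0:ℝ)) := by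
      refine monotoneOn_of_deriv_nonneg (convex_Ici 0) ?_ ?_ ?_
      · exact hctIci.sub (continuousOn_const.mul continuousOn_id)
      · intro x hx
        rw [interior_Ici] at hx
        have hlin : HasDerivAt (fun t : ℝ => δ * t) δ x := by
          simpa using (hasDerivAt_id x).const_mul δ
        exact (((hB x (mem_Ici.mpr hx.le)).2).sub hlin).differentiableAt.differentiableWithinAt
      · intro x hx
        rw [interior_Ici] at hx
        have hx' : x ∈ Ici (0:ℝ) := mem_Ici.mpr hx.le
        have hlin : HasDerivAt (fun t : ℝ => δ * t) δ x := by
          simpa using (hasDerivAt_id x).const_mul δ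
        have hd : HasDerivAt (fun t => B t - δ * t) ((8 - 16*α/(B x)) - δ) x :=
          ((hB x hx').2).sub hlin
        rw [hd.deriv]
        have h1 : 16*α/(B x) ≤ 16*α/B₀ :=
          div_le_div_of_nonneg_left (by linarith) (by linarith) (hge x hx')
        simp only [hδ]; linarith
    have hlb : ∀ᶠ t in atTop, B₀ + δ * t ≤ B t := by
      filter_upwards [eventually_ge_atTop (0:ℝ)] with t ht
      have := hmono2 (self_mem_Ici) (mem_Ici.mpr ht) ht
      simp only [mul_zero, sub_zero, hB0] at this
      linarith
    apply tendsto_atTop_mono' atTop hlb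
    exact tendsto_atTop_add_const_left _ _ (tendsto_id.const_mul_atTop hδpos)
  -- derivative of A
  · intro t ht
    have hBt := hgt t ht
    have hBt0 : (0:ℝ) < B t := hpos t ht
    have hu : HasDerivAt (fun s => 1 - 2*α/(B s))
        (-((0 * B t - 2*α * (8 - 16*α/(B t)))/(B t)^2)) t := by
      have := (hasDerivAt_const t (2*α)).div ((hB t ht).2) (ne_of_gt hBt0)
      exact ((hasDerivAt_const t (1:ℝ)).sub this).congr_deriv (by ring)
    have hune : 1 - 2*α/(B t) ≠ 0 := by
      have : 2*α/(B t) < 1 := (div_lt_one hBt0).mpr hBt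
      linarith
    have hu' : HasDerivAt (fun s => 1 - 2*α/(B s)) (16*α*(B t - 2*α)/(B t)^3) t := by
      convert hu using 1
      have h1 : B t ≠ 0 := ne_of_gt hBt0
      field_simp
      ring
    have hA := (hasDerivAt_const t (A₀*(1 - 2*α/B₀))).div hu' hune
    refine hA.congr_deriv ?_
    have hB₀0 : (0:ℝ) < B₀ := by linarith
    have h1 : B t ≠ 0 := ne_of_gt hBt0
    have h2 : B t - 2*α ≠ 0 := ne_of_gt (by linarith)
    have h3 : B₀ - 2*α ≠ 0 := ne_of_gt (by linarith)
    have h4 : B₀ ≠ 0 := ne_of_gt hB₀0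
    field_simp
    ring
  -- limit of A
  · have hBtop : Tendsto B atTop atTop := by
      -- reuse: we can't reuse the proven branch; rebuild quickly
      have hge : ∀ t ∈ Ici (0:ℝ), B₀ ≤ B t := by
        intro t ht
        rcases eq_or_lt_of_le (mem_Ici.mp ht) with h | h
        · rw [← h, hB0]
        · rw [← hB0]; exact (hsm (self_mem_Ici) ht h).le
      set δ := 8 - 16*α/B₀ with hδ
      have hδpos : 0 < δ := by
        have : 16*α/B₀ < 8 := by rw [div_lt_iff₀ (by linarith : (0:ℝ) < B₀)]; linarith
        simp only [hδ]; linarith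
      have hmono2 : MonotoneOn (fun t => B t - δ * t) (Ici (0:ℝ)) := by
        refine monotoneOn_of_deriv_nonneg (convex_Ici 0) ?_ ?_ ?_
        · exact hctIci.sub (continuousOn_const.mul continuousOn_id)
        · intro x hx
          rw [interior_Ici] at hx
          have hlin : HasDerivAt (fun t : ℝ => δ * t) δ x := by
            simpa using (hasDerivAt_id x).const_mul δ
          exact (((hB x (mem_Ici.mpr hx.le)).2).sub hlin).differentiableAt.differentiableWithinAt
        · intro x hx
          rw [interior_Ici] at hx
          have hx' : x ∈ Ici (0:ℝ) := mem_Ici.mpr hx.le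
          have hlin : HasDerivAt (fun t : ℝ => δ * t) δ x := by
            simpa using (hasDerivAt_id x).const_mul δ
          have hd : HasDerivAt (fun t => B t - δ * t) ((8 - 16*α/(B x)) - δ) x :=
            ((hB x hx').2).sub hlin
          rw [hd.deriv]
          have h1 : 16*α/(B x) ≤ 16*α/B₀ :=
            div_le_div_of_nonneg_left (by linarith) (by linarith) (hge x hx')
          simp only [hδ]; linarith
      have hlb : ∀ᶠ t in atTop, B₀ + δ * t ≤ B t := by
        filter_upwards [eventually_ge_atTop (0:ℝ)] with t ht
        have := hmono2 (self_mem_Ici) (mem_Ici.mpr ht) ht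
        simp only [mul_zero, sub_zero, hB0] at this
        linarith
      apply tendsto_atTop_mono' atTop hlb
      exact tendsto_atTop_add_const_left _ _ (tendsto_id.const_mul_atTop hδpos)
    have hden : Tendsto (fun t => 1 - 2*α/(B t)) atTop (𝓝 1) := by
      have h0 : Tendsto (fun t => 2*α/(B t)) atTop (𝓝 0) :=
        Tendsto.div_atTop tendsto_const_nhds hBtop
      simpa using (tendsto_const_nhds (x := (1:ℝ)) (f := atTop)).sub h0
    have := (tendsto_const_nhds (x := A₀*(1 - 2*α/B₀)) (f := atTop)).div hden one_ne_zero
    rw [div_one] at this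
    exact this
end

section
/- Let α > 0 and let (A,B) solve A' = -16αA/B², B' = 8 - 16α/B with 0 < B₀ < 2α, A₀ > 0. Then B is strictly decreasing, the maximal existence time t_max is finite, and A(t) → 0 and B(t) → 0 as t → t_max. -/
open Set Filter Topology

lemma hasDerivAt_fst_comp' {f : ℝ → ℝ × ℝ} {d : ℝ × ℝ} {x : ℝ} (h : HasDerivAt f d x) :
    HasDerivAt (fun t => (f t).1) d.1 x := by
  simpa using h.hasFDerivAt.fst.hasDerivAt

lemma hasDerivAt_snd_comp' {f : ℝ → ℝ × ℝ} {d : ℝ × ℝ} {x : ℝ} (h : HasDerivAt f d x) :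
    HasDerivAt (fun t => (f t).2) d.2 x := by
  simpa using h.hasFDerivAt.snd.hasDerivAt

structure OldPL {E : Type*} [NormedAddCommGroup E] (v : ℝ → E → E) (tMin t₀ tMax : ℝ) (x₀ : E)
    (L : NNReal) (R C : ℝ) : Prop where
  ht₀ : t₀ ∈ Icc tMin tMax
  hR : 0 ≤ R
  lipschitz : ∀ t ∈ Icc tMin tMax, LipschitzOnWith L (v t) (Metric.closedBall x₀ R)
  cont : ∀ x ∈ Metric.closedBall x₀ R, ContinuousOn (fun t => v t x) (Icc tMin tMax)
  norm_le : ∀ t ∈ Icc tMin tMax, ∀ x ∈ Metric.closedBall x₀ R, ‖v t x‖ ≤ C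
  C_mul_le_R : C * max (tMax - t₀) (t₀ - tMin) ≤ R

theorem OldPL.norm_le₀ {E : Type*} [NormedAddCommGroup E] {v : ℝ → E → E} {tMin t₀ tMax : ℝ}
    {x₀ : E} {L : NNReal} {R C : ℝ} (hpl : OldPL v tMin t₀ tMax x₀ L R C) : ‖v t₀ x₀‖ ≤ C :=
  hpl.norm_le t₀ hpl.ht₀ x₀ (Metric.mem_closedBall_self hpl.hR)

theorem my_pl_const_of_contDiffAt {E : Type*} [NormedAddCommGroup E] [NormedSpace ℝ E]
    {v : E → E} {x₀ : E} (t₀ : ℝ) (hv : ContDiffAt ℝ 1 v x₀) :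
    ∃ ε > (0:ℝ), ∃ (L : NNReal) (R C : ℝ), OldPL (fun _ => v) (t₀ - ε) t₀ (t₀ + ε) x₀ L R C := by
  obtain ⟨ε, hε, a, r, L, K, _, h⟩ := IsPicardLindelof.of_contDiffAt_one hv
  have h' := h t₀
  refine ⟨ε, hε, K, a, L, ⟨⟨by linarith, by linarith⟩, NNReal.coe_nonneg a, h'.lipschitzOnWith,
    h'.continuousOn, h'.norm_le, ?_⟩⟩
  have hr : (0:ℝ) ≤ r := NNReal.coe_nonneg r
  exact le_trans h'.mul_max_le (by linarith)

theorem my_pl_exists {E : Type*} [NormedAddCommGroup E] [NormedSpace ℝ E] [CompleteSpace E]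
    {v : ℝ → E → E} {tMin t₀ tMax : ℝ} (x₀ : E) {C R : ℝ} {L : NNReal}
    (hpl : OldPL v tMin t₀ tMax x₀ L R C) :
    ∃ f : ℝ → E, f t₀ = x₀ ∧
      ∀ t ∈ Icc tMin tMax, HasDerivWithinAt f (v t (f t)) (Icc tMin tMax) t ∧
        f t ∈ Metric.closedBall x₀ R := by
  have hC : 0 ≤ C := (norm_nonneg _).trans hpl.norm_le₀
  lift C to NNReal using hC
  lift R to NNReal using hpl.hR
  have hnew : IsPicardLindelof v (⟨t₀, hpl.ht₀⟩ : Icc tMin tMax) x₀ R 0 C L :=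
    { lipschitzOnWith := hpl.lipschitz
      continuousOn := hpl.cont
      norm_le := hpl.norm_le
      mul_max_le := by rw [NNReal.coe_zero, sub_zero]; exact hpl.C_mul_le_R }
  have hx : x₀ ∈ Metric.closedBall x₀ ((0:NNReal):ℝ) := Metric.mem_closedBall_self le_rfl
  obtain ⟨α, hα⟩ := ODE.FunSpace.exists_isFixedPt_next hnew hx
  refine ⟨α.compProj, by show α.compProj ((⟨t₀, hpl.ht₀⟩ : Icc tMin tMax) : ℝ) = x₀; rw [ODE.FunSpace.compProj_val, ← hα, ODE.FunSpace.next_apply₀],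
    fun t ht => ⟨?_, α.compProj_mem_closedBall hnew.mul_max_le⟩⟩
  apply ODE.hasDerivWithinAt_picard_Icc hpl.ht₀ hnew.continuousOn_uncurry
    α.continuous_compProj.continuousOn (fun _ ht' ↦ α.compProj_mem_closedBall hnew.mul_max_le)
    x₀ ht |>.congr_of_mem _ ht
  intro t' ht'
  nth_rw 1 [← hα]
  rw [ODE.FunSpace.compProj_of_mem ht', ODE.FunSpace.next_apply]

set_option maxHeartbeats 2000000 in
/-- For the LRS Sol RG-2 system `A' = -16αA/B²`, `B' = 8 - 16α/B` with
`0 < B₀ < 2α`, `A₀ > 0`: `B` is strictly decreasing, the maximal existence time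
is finite (bounded by `B₀²/(16α - 8B₀)`), and `A(t) → 0`, `B(t) → 0` as
`t → t_max`. -/
theorem rg2_sol_shrinker_case
    (α A₀ B₀ tmax : ℝ) (hα : 0 < α) (hA₀ : 0 < A₀) (hB₀ : 0 < B₀)
    (hB₀2 : B₀ < 2*α) (htmax : 0 < tmax)
    (A B : ℝ → ℝ) (hA0 : A 0 = A₀) (hB0 : B 0 = B₀)
    (hsol : ∀ t ∈ Ico (0:ℝ) tmax, 0 < A t ∧ 0 < B t ∧
      HasDerivAt A (-16*α*(A t)/(B t)^2) t ∧
      HasDerivAt B (8 - 16*α/(B t)) t)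
    (hmaximal : ¬ ∃ (T' : ℝ) (A' B' : ℝ → ℝ), tmax < T' ∧
      (∀ t ∈ Ico (0:ℝ) tmax, A' t = A t ∧ B' t = B t) ∧
      ∀ t ∈ Ico (0:ℝ) T', 0 < A' t ∧ 0 < B' t ∧
        HasDerivAt A' (-16*α*(A' t)/(B' t)^2) t ∧
        HasDerivAt B' (8 - 16*α/(B' t)) t) :
    StrictAntiOn B (Ico (0:ℝ) tmax) ∧
    tmax ≤ B₀^2/(16*α - 8*B₀) ∧
    Tendsto A (nhdsWithin tmax (Iio tmax)) (nhds 0) ∧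
    Tendsto B (nhdsWithin tmax (Iio tmax)) (nhds 0) := by
  have hApos : ∀ t ∈ Ico (0:ℝ) tmax, 0 < A t := fun t ht => (hsol t ht).1
  have hBpos : ∀ t ∈ Ico (0:ℝ) tmax, 0 < B t := fun t ht => (hsol t ht).2.1
  have hAd : ∀ t ∈ Ico (0:ℝ) tmax, HasDerivAt A (-16*α*(A t)/(B t)^2) t :=
    fun t ht => (hsol t ht).2.2.1
  have hBd : ∀ t ∈ Ico (0:ℝ) tmax, HasDerivAt B (8 - 16*α/(B t)) t :=
    fun t ht => (hsol t ht).2.2.2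
  have hmem : ∀ x ∈ Ioo (0:ℝ) tmax, x ∈ Ico (0:ℝ) tmax := fun x hx => ⟨hx.1.le, hx.2⟩
  have h0mem : (0:ℝ) ∈ Ico (0:ℝ) tmax := ⟨le_refl _, htmax⟩
  have contA : ContinuousOn A (Ico (0:ℝ) tmax) :=
    fun t ht => (hAd t ht).continuousAt.continuousWithinAt
  have contB : ContinuousOn B (Ico (0:ℝ) tmax) :=
    fun t ht => (hBd t ht).continuousAt.continuousWithinAt
  -- B stays below 2α
  have hblt : ∀ t ∈ Ico (0:ℝ) tmax, B t < 2*α := by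
    by_contra hcon
    push_neg at hcon
    obtain ⟨t₂, ht₂, h2⟩ := hcon
    have hsub : Icc (0:ℝ) t₂ ⊆ Ico (0:ℝ) tmax :=
      fun s hs => ⟨hs.1, lt_of_le_of_lt hs.2 ht₂.2⟩
    have hSc : IsClosed (Icc (0:ℝ) t₂ ∩ B ⁻¹' Ici (2*α)) :=
      (contB.mono hsub).preimage_isClosed_of_isClosed isClosed_Icc isClosed_Ici
    have hSne : (Icc (0:ℝ) t₂ ∩ B ⁻¹' Ici (2*α)).Nonempty :=
      ⟨t₂, ⟨ht₂.1, le_refl _⟩, h2⟩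
    have hbdd : BddBelow (Icc (0:ℝ) t₂ ∩ B ⁻¹' Ici (2*α)) := ⟨0, fun x hx => hx.1.1⟩
    set t₁ := sInf (Icc (0:ℝ) t₂ ∩ B ⁻¹' Ici (2*α)) with ht₁def
    have ht₁S := hSc.csInf_mem hSne hbdd
    have ht₁B : 2*α ≤ B t₁ := ht₁S.2
    have ht₁pos : 0 < t₁ := by
      rcases lt_or_eq_of_le ht₁S.1.1 with h | h
      · exact h
      · exfalso; rw [← ht₁def] at h; rw [← h, hB0] at ht₁B; linarith
    have hanti : StrictAntiOn B (Icc (0:ℝ) t₁) := by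
      apply strictAntiOn_of_deriv_neg (convex_Icc _ _)
      · exact contB.mono fun s hs => hsub ⟨hs.1, hs.2.trans ht₁S.1.2⟩
      · intro x hx
        rw [interior_Icc] at hx
        have hxI : x ∈ Ico (0:ℝ) tmax :=
          ⟨hx.1.le, lt_of_le_of_lt (hx.2.le.trans ht₁S.1.2) ht₂.2⟩
        have hxnS : x ∉ Icc (0:ℝ) t₂ ∩ B ⁻¹' Ici (2*α) := notMem_of_lt_csInf hx.2 hbdd
        have hxlt : B x < 2*α := by
          by_contra hh
          exact hxnS ⟨⟨hx.1.le, hx.2.le.trans ht₁S.1.2⟩, not_lt.mp hh⟩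
        rw [(hBd x hxI).deriv]
        have hBx := hBpos x hxI
        have : 8 < 16*α/(B x) := (lt_div_iff₀ hBx).mpr (by linarith)
        linarith
    have := hanti ⟨le_refl _, ht₁pos.le⟩ ⟨ht₁pos.le, le_refl _⟩ ht₁pos
    rw [hB0] at this
    linarith
  -- Part 1
  have hBanti : StrictAntiOn B (Ico (0:ℝ) tmax) := by
    apply strictAntiOn_of_deriv_neg (convex_Ico _ _) contB
    intro x hx
    rw [interior_Ico] at hx
    have hxI := hmem x hx
    rw [(hBd x hxI).deriv]
    have hBx := hBpos x hxI
    have : 8 < 16*α/(B x) := (lt_div_iff₀ hBx).mpr (by linarith [hblt x hxI])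
    linarith
  have hAanti : StrictAntiOn A (Ico (0:ℝ) tmax) := by
    apply strictAntiOn_of_deriv_neg (convex_Ico _ _) contA
    intro x hx
    rw [interior_Ico] at hx
    have hxI := hmem x hx
    rw [(hAd x hxI).deriv]
    apply div_neg_of_neg_of_pos
    · nlinarith [hApos x hxI]
    · have := hBpos x hxI; positivity
  have hBleB₀ : ∀ t ∈ Ico (0:ℝ) tmax, B t ≤ B₀ := by
    intro t ht
    rcases eq_or_lt_of_le ht.1 with h | h
    · rw [← h, hB0]
    · rw [← hB0]; exact (hBanti h0mem ht h).le
  have hAleA₀ : ∀ t ∈ Ico (0:ℝ) tmax, A t ≤ A₀ := by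
    intro t ht
    rcases eq_or_lt_of_le ht.1 with h | h
    · rw [← h, hA0]
    · rw [← hA0]; exact (hAanti h0mem ht h).le
  -- Part 2
  have hc : (0:ℝ) < 16*α/B₀ - 8 := by
    have : 8 < 16*α/B₀ := (lt_div_iff₀ hB₀).mpr (by linarith)
    linarith
  have hlin : ∀ t ∈ Ico (0:ℝ) tmax, B t + (16*α/B₀ - 8)*t ≤ B₀ := by
    have hmono : AntitoneOn (fun t => B t + (16*α/B₀ - 8)*t) (Ico (0:ℝ) tmax) := by
      apply antitoneOn_of_deriv_nonpos (convex_Ico _ _)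
      · exact contB.add (Continuous.continuousOn (by fun_prop))
      · intro x hx
        rw [interior_Ico] at hx
        have hlinx : HasDerivAt (fun t : ℝ => (16*α/B₀ - 8)*t) (16*α/B₀ - 8) x := by
          simpa using (hasDerivAt_id x).const_mul (16*α/B₀ - 8)
        exact ((hBd x (hmem x hx)).add hlinx).differentiableAt.differentiableWithinAt
      · intro x hx
        rw [interior_Ico] at hx
        have hxI := hmem x hx
        have hlinx : HasDerivAt (fun t : ℝ => (16*α/B₀ - 8)*t) (16*α/B₀ - 8) x := by
          simpa using (hasDerivAt_id x).const_mul (16*α/B₀ - 8)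
        rw [show (fun t => B t + (16*α/B₀ - 8)*t) = B + fun t => (16*α/B₀ - 8)*t from rfl,
          ((hBd x hxI).add hlinx).deriv]
        have hdiv : 16*α/B₀ ≤ 16*α/(B x) := by
          apply div_le_div_of_nonneg_left (by linarith) (hBpos x hxI) (hBleB₀ x hxI)
        linarith
    intro t ht
    have := hmono h0mem ht ht.1
    simpa [hB0] using this
  have hpart2 : tmax ≤ B₀^2/(16*α - 8*B₀) := by
    have hb : ∀ t ∈ Ico (0:ℝ) tmax, t < B₀/(16*α/B₀ - 8) := by
      intro t ht
      have h1 := hlin t ht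
      have h2 := hBpos t ht
      rw [lt_div_iff₀ hc]
      linarith [mul_comm t (16*α/B₀ - 8)]
    have hBc : 0 < B₀/(16*α/B₀ - 8) := by positivity
    have h3 : tmax ≤ B₀/(16*α/B₀ - 8) := by
      by_contra hh
      push_neg at hh
      have hmm : (B₀/(16*α/B₀ - 8) + tmax)/2 ∈ Ico (0:ℝ) tmax :=
        ⟨by linarith, by linarith⟩
      have := hb _ hmm
      linarith
    have heq : B₀/(16*α/B₀ - 8) = B₀^2/(16*α - 8*B₀) := by
      have h1 : 16*α/B₀ - 8 = (16*α - 8*B₀)/B₀ := by field_simp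
      rw [h1, div_div_eq_mul_div, sq]
    rw [← heq]; exact h3
  -- limits of A and B at tmax
  have hIoo_ne : (Ioo (0:ℝ) tmax).Nonempty := ⟨tmax/2, by constructor <;> linarith⟩
  have hBbdd : BddBelow (B '' Ioo 0 tmax) := by
    refine ⟨0, ?_⟩; rintro y ⟨x, hx, rfl⟩; exact (hBpos x (hmem x hx)).le
  have hAbdd : BddBelow (A '' Ioo 0 tmax) := by
    refine ⟨0, ?_⟩; rintro y ⟨x, hx, rfl⟩; exact (hApos x (hmem x hx)).le
  set L := sInf (B '' Ioo 0 tmax) with hLdef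
  set M := sInf (A '' Ioo 0 tmax) with hMdef
  have hBtendL : Tendsto B (𝓝[<] tmax) (𝓝 L) :=
    AntitoneOn.tendsto_nhdsWithin_Ioo_left hIoo_ne
      ((hBanti.antitoneOn).mono (fun x hx => hmem x hx)) hBbdd
  have hAtendM : Tendsto A (𝓝[<] tmax) (𝓝 M) :=
    AntitoneOn.tendsto_nhdsWithin_Ioo_left hIoo_ne
      ((hAanti.antitoneOn).mono (fun x hx => hmem x hx)) hAbdd
  have hL0 : 0 ≤ L := le_csInf (hIoo_ne.image B)
    (by rintro y ⟨x, hx, rfl⟩; exact (hBpos x (hmem x hx)).le)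
  have hLle : ∀ t ∈ Ioo (0:ℝ) tmax, L ≤ B t :=
    fun t ht => csInf_le hBbdd (mem_image_of_mem B ht)
  have hMle : ∀ t ∈ Ioo (0:ℝ) tmax, M ≤ A t :=
    fun t ht => csInf_le hAbdd (mem_image_of_mem A ht)
  have hLzero : L = 0 := by
    by_contra hLne
    have hLpos : 0 < L := hL0.lt_of_ne (Ne.symm hLne)
    -- positive lower bound for A
    have hAlower : ∀ t ∈ Ico (0:ℝ) tmax, A₀ * Real.exp (-(16*α/L^2)*tmax) ≤ A t := by
      have hgd : ∀ x ∈ Ioo (0:ℝ) tmax, HasDerivAt (fun t => A t * Real.exp ((16*α/L^2)*t))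
          ((-16*α*(A x)/(B x)^2) * Real.exp ((16*α/L^2)*x)
            + A x * ((16*α/L^2) * Real.exp ((16*α/L^2)*x))) x := by
        intro x hx
        have hxI := hmem x hx
        have h0 : HasDerivAt (fun t : ℝ => (16*α/L^2)*t) (16*α/L^2) x := by
          simpa using (hasDerivAt_id x).const_mul (16*α/L^2)
        have he : HasDerivAt (fun t : ℝ => Real.exp ((16*α/L^2)*t))
            ((16*α/L^2) * Real.exp ((16*α/L^2)*x)) x := by
          simpa [mul_comm] using h0.exp
        exact (hAd x hxI).mul he
      have hgm : MonotoneOn (fun t => A t * Real.exp ((16*α/L^2)*t)) (Ico (0:ℝ) tmax) := by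
        apply monotoneOn_of_deriv_nonneg (convex_Ico _ _)
        · exact contA.mul (Continuous.continuousOn (by fun_prop))
        · intro x hx
          rw [interior_Ico] at hx
          exact (hgd x hx).differentiableAt.differentiableWithinAt
        · intro x hx
          rw [interior_Ico] at hx
          rw [(hgd x hx).deriv]
          have hxI := hmem x hx
          have hAx := hApos x hxI
          have hBx := hBpos x hxI
          have hLB := hLle x hx
          have hd1 : 16*α*(A x)/(B x)^2 ≤ 16*α*(A x)/L^2 :=
            div_le_div_of_nonneg_left (by positivity) (by positivity) (by nlinarith)
          have hE := Real.exp_pos ((16*α/L^2)*x)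
          have hm := mul_le_mul_of_nonneg_right hd1 hE.le
          ring_nf at hm ⊢
          linarith [hm]
      intro t ht
      have h1 := hgm h0mem ht ht.1
      simp only [hA0, mul_zero, Real.exp_zero, mul_one] at h1
      have h2 : Real.exp (-(16*α/L^2)*tmax) ≤ Real.exp (-(16*α/L^2)*t) := by
        apply Real.exp_le_exp.mpr
        have hc0 : (0:ℝ) ≤ 16*α/L^2 := by positivity
        nlinarith [ht.2.le]
      calc A₀ * Real.exp (-(16*α/L^2)*tmax) ≤ A₀ * Real.exp (-(16*α/L^2)*t) :=
            mul_le_mul_of_nonneg_left h2 hA₀.le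
        _ ≤ (A t * Real.exp ((16*α/L^2)*t)) * Real.exp (-(16*α/L^2)*t) :=
            mul_le_mul_of_nonneg_right h1 (Real.exp_pos _).le
        _ = A t := by
            have hz : (16*α/L^2)*t + -(16*α/L^2)*t = 0 := by ring
            rw [mul_assoc, ← Real.exp_add, hz, Real.exp_zero, mul_one]
    have hMpos : 0 < M := by
      have : 0 < A₀ * Real.exp (-(16*α/L^2)*tmax) := by positivity
      refine lt_of_lt_of_le this (le_csInf (hIoo_ne.image A) ?_)
      rintro y ⟨x, hx, rfl⟩
      exact hAlower x (hmem x hx)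
    -- the vector field
    set V : ℝ × ℝ → ℝ × ℝ := fun p => (-16*α*p.1/p.2^2, 8 - 16*α/p.2) with hVdef
    have hVc : ContDiffAt ℝ 1 V ((M, L) : ℝ × ℝ) := by
      rw [hVdef]
      apply ContDiffAt.prodMk
      · apply ContDiffAt.div (by fun_prop) (by fun_prop)
        exact pow_ne_zero 2 (ne_of_gt hLpos)
      · apply ContDiffAt.sub contDiffAt_const
        apply ContDiffAt.div contDiffAt_const (by fun_prop)
        exact ne_of_gt hLpos
    obtain ⟨ε₀, hε₀, K, R, C, hpl⟩ := my_pl_const_of_contDiffAt tmax hVc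
    have hnorm := hpl.norm_le₀
    have h1V : (V ((M,L) : ℝ×ℝ)).1 = -16*α*M/L^2 := by rw [hVdef]
    have h2V : -16*α*M/L^2 ≠ 0 := by
      apply div_ne_zero _ (pow_ne_zero 2 (ne_of_gt hLpos))
      nlinarith
    have hCpos : 0 < C := by
      have h5 : ‖(V ((M,L):ℝ×ℝ)).1‖ ≤ ‖V ((M,L):ℝ×ℝ)‖ := norm_fst_le _
      rw [h1V, Real.norm_eq_abs] at h5
      have h6 : 0 < |(-16*α*M/L^2)| := abs_pos.mpr h2V
      linarith
    have hRpos : 0 < R := by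
      have h := hpl.C_mul_le_R
      rw [add_sub_cancel_left, sub_sub_cancel, max_self] at h
      nlinarith
    set ε' := R/(2*(C+1)) with hε'def
    have hε'pos : 0 < ε' := by rw [hε'def]; positivity
    -- choose t₁ close to tmax
    have hev1 : ∀ᶠ t in 𝓝[<] tmax, t ∈ Ioo (max 0 (tmax - ε')) tmax :=
      Ioo_mem_nhdsLT_of_mem ⟨max_lt htmax (by linarith), le_refl _⟩
    have hev2 : ∀ᶠ t in 𝓝[<] tmax, A t < M + R/2 :=
      hAtendM.eventually_lt_const (by linarith)
    have hev3 : ∀ᶠ t in 𝓝[<] tmax, B t < L + R/2 :=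
      hBtendL.eventually_lt_const (by linarith)
    obtain ⟨t₁, ht1, ht2, ht3⟩ := (hev1.and (hev2.and hev3)).exists
    have ht₁pos : 0 < t₁ := lt_of_le_of_lt (le_max_left 0 (tmax - ε')) ht1.1
    have ht₁lt : t₁ < tmax := ht1.2
    have ht₁ε : tmax - t₁ < ε' := by
      have := lt_of_le_of_lt (le_max_right 0 (tmax - ε')) ht1.1
      linarith
    have ht₁I : t₁ ∈ Ico (0:ℝ) tmax := ⟨ht₁pos.le, ht₁lt⟩
    have ht₁Ioo : t₁ ∈ Ioo (0:ℝ) tmax := ⟨ht₁pos, ht₁lt⟩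
    have hMA : M ≤ A t₁ := hMle t₁ ht₁Ioo
    have hLB : L ≤ B t₁ := hLle t₁ ht₁Ioo
    have hclose : dist ((A t₁, B t₁) : ℝ×ℝ) ((M,L) : ℝ×ℝ) ≤ R/2 := by
      rw [Prod.dist_eq]
      apply max_le
      · rw [Real.dist_eq, abs_le]
        constructor <;> simp only [] <;> linarith
      · rw [Real.dist_eq, abs_le]
        constructor <;> simp only [] <;> linarith
    have hballsub : Metric.closedBall ((A t₁, B t₁) : ℝ×ℝ) (R/2) ⊆
        Metric.closedBall ((M,L):ℝ×ℝ) R :=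
      Metric.closedBall_subset_closedBall' (by linarith)
    have htmk : tmax ∈ Icc (tmax - ε₀) (tmax + ε₀) := ⟨by linarith, by linarith⟩
    have hlips := hpl.lipschitz tmax htmk
    have hpl2 : OldPL (fun _ => V) (t₁ - ε') t₁ (t₁ + ε')
        ((A t₁, B t₁) : ℝ×ℝ) K (R/2) C := by
      refine ⟨⟨by linarith, by linarith⟩, by linarith, ?_, ?_, ?_, ?_⟩
      · intro t ht
        exact hlips.mono hballsub
      · intro x hx
        exact continuousOn_const
      · intro t ht x hx
        exact hpl.norm_le tmax htmk x (hballsub hx)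
      · rw [add_sub_cancel_left, sub_sub_cancel, max_self, hε'def]
        calc C * (R/(2*(C+1))) = (C*R)/(2*(C+1)) := by ring
          _ ≤ R/2 := by
            rw [div_le_div_iff₀ (by positivity) (by norm_num : (0:ℝ) < 2)]
            nlinarith
    obtain ⟨f, hf0, hf⟩ := my_pl_exists ((A t₁, B t₁) : ℝ×ℝ) hpl2
    have htmaxIoo : tmax ∈ Ioo (t₁ - ε') (t₁ + ε') := ⟨by linarith, by linarith⟩
    have hfd : ∀ t ∈ Ioo (t₁ - ε') (t₁ + ε'), HasDerivAt f (V (f t)) t := fun t ht =>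
      ((hf t (Ioo_subset_Icc_self ht)).1).hasDerivAt (Icc_mem_nhds ht.1 ht.2)
    have hfball : ∀ t ∈ Icc (t₁ - ε') (t₁ + ε'), f t ∈ Metric.closedBall ((M,L):ℝ×ℝ) R :=
      fun t ht => hballsub (hf t ht).2
    -- uniqueness on [t₁, tmax)
    have hEq : ∀ t ∈ Ico t₁ tmax, f t = (A t, B t) := by
      intro t ht
      have hsub1 : Icc t₁ t ⊆ Ioo (t₁ - ε') (t₁ + ε') :=
        fun s hs => ⟨by linarith [hs.1], by linarith [hs.2, ht.2]⟩
      have hsub2 : Icc t₁ t ⊆ Ico (0:ℝ) tmax :=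
        fun s hs => ⟨le_trans ht₁pos.le hs.1, lt_of_le_of_lt hs.2 ht.2⟩
      have huniq := ODE_solution_unique_of_mem_Icc_right
        (v := fun _ (p : ℝ×ℝ) => V p) (s := fun _ => Metric.closedBall ((M,L):ℝ×ℝ) R)
        (K := K) (f := f) (g := fun s => (A s, B s)) (a := t₁) (b := t)
        (fun _ _ => hlips)
        (fun s hs => ((hfd s (hsub1 hs)).continuousAt).continuousWithinAt)
        (fun s hs => (hfd s (hsub1 (Ico_subset_Icc_self hs))).hasDerivWithinAt)
        (fun s hs => hfball s (Ioo_subset_Icc_self (hsub1 (Ico_subset_Icc_self hs))))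
        ((contA.mono hsub2).prodMk (contB.mono hsub2))
        (fun s hs => by
          have hsI := hsub2 (Ico_subset_Icc_self hs)
          have hder := ((hAd s hsI).prodMk (hBd s hsI)).hasDerivWithinAt (s := Ici s)
          simpa [hVdef] using hder)
        (fun s hs => by
          have hsI := hsub2 (Ico_subset_Icc_self hs)
          have hsIoo : s ∈ Ioo (0:ℝ) tmax := ⟨lt_of_lt_of_le ht₁pos hs.1, hsI.2⟩
          have h1 : A s ≤ A t₁ := by
            rcases eq_or_lt_of_le hs.1 with h | h
            · rw [← h]
            · exact (hAanti ht₁I hsI h).le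
          have h2 : B s ≤ B t₁ := by
            rcases eq_or_lt_of_le hs.1 with h | h
            · rw [← h]
            · exact (hBanti ht₁I hsI h).le
          rw [Metric.mem_closedBall, Prod.dist_eq]
          apply max_le
          · rw [Real.dist_eq, abs_le]
            constructor
            all_goals linarith [hMle s hsIoo]
          · rw [Real.dist_eq, abs_le]
            constructor
            all_goals linarith [hLle s hsIoo])
        hf0
      exact huniq ⟨ht.1, le_refl t⟩
    -- value at tmax
    have hcf : ContinuousAt f tmax := (hfd tmax htmaxIoo).continuousAt
    have hftmax : f tmax = ((M, L) : ℝ×ℝ) := by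
      have h1 : Tendsto f (𝓝[<] tmax) (𝓝 (f tmax)) :=
        hcf.tendsto.mono_left nhdsWithin_le_nhds
      have h3 : f =ᶠ[𝓝[<] tmax] fun t => (A t, B t) := by
        filter_upwards [Ioo_mem_nhdsLT_of_mem (⟨ht₁lt, le_refl tmax⟩ : tmax ∈ Ioc t₁ tmax)]
          with s hs
        exact hEq s ⟨hs.1.le, hs.2⟩
      exact tendsto_nhds_unique (h1.congr' h3) (hAtendM.prodMk_nhds hBtendL)
    -- positivity neighbourhood of tmax
    have hUopen : IsOpen {p : ℝ×ℝ | 0 < p.1 ∧ 0 < p.2} :=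
      (isOpen_lt continuous_const continuous_fst).inter
        (isOpen_lt continuous_const continuous_snd)
    have hpre : f ⁻¹' {p : ℝ×ℝ | 0 < p.1 ∧ 0 < p.2} ∈ 𝓝 tmax := by
      apply hcf.preimage_mem_nhds
      rw [hftmax]
      exact hUopen.mem_nhds ⟨hMpos, hLpos⟩
    obtain ⟨δ, hδpos, hδball⟩ := Metric.mem_nhds_iff.mp hpre
    set T' := min (tmax + δ/2) ((tmax + (t₁ + ε'))/2) with hT'def
    have hT'1 : tmax < T' := lt_min (by linarith) (by linarith)
    have hT'2 : T' < t₁ + ε' := lt_of_le_of_lt (min_le_right _ _) (by linarith)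
    have hT'3 : T' ≤ tmax + δ/2 := min_le_left _ _
    apply hmaximal
    refine ⟨T', (fun t => if t < tmax then A t else (f t).1),
      (fun t => if t < tmax then B t else (f t).2), hT'1,
      fun t ht => ⟨if_pos ht.2, if_pos ht.2⟩, ?_⟩
    intro t ht
    by_cases htm : t < tmax
    · have htI : t ∈ Ico (0:ℝ) tmax := ⟨ht.1, htm⟩
      have heA : (fun s => if s < tmax then A s else (f s).1) =ᶠ[𝓝 t] A := by
        filter_upwards [isOpen_Iio.mem_nhds htm] with s hs
        exact if_pos hs
      have heB : (fun s => if s < tmax then B s else (f s).2) =ᶠ[𝓝 t] B := by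
        filter_upwards [isOpen_Iio.mem_nhds htm] with s hs
        exact if_pos hs
      refine ⟨?_, ?_, ?_, ?_⟩
      · simp only [if_pos htm]; exact hApos t htI
      · simp only [if_pos htm]; exact hBpos t htI
      · simp only [if_pos htm]
        exact (hAd t htI).congr_of_eventuallyEq heA
      · simp only [if_pos htm]
        exact (hBd t htI).congr_of_eventuallyEq heB
    · push_neg at htm
      have hnlt : ¬ t < tmax := not_lt.mpr htm
      have htb : t ∈ Metric.ball tmax δ := by
        rw [Metric.mem_ball, Real.dist_eq, abs_of_nonneg (by linarith)]
        have h7 := ht.2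
        linarith
      have hpos := hδball htb
      have htIoo2 : t ∈ Ioo (t₁ - ε') (t₁ + ε') :=
        ⟨by linarith, lt_of_lt_of_le ht.2 hT'2.le⟩
      have hfdt := hfd t htIoo2
      have heA : (fun s => if s < tmax then A s else (f s).1) =ᶠ[𝓝 t]
          (fun s => (f s).1) := by
        filter_upwards [isOpen_Ioi.mem_nhds (show t₁ < t by linarith)] with s hs
        by_cases h's : s < tmax
        · rw [if_pos h's]
          exact (congrArg Prod.fst (hEq s ⟨hs.le, h's⟩)).symm
        · rw [if_neg h's]
      have heB : (fun s => if s < tmax then B s else (f s).2) =ᶠ[𝓝 t]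
          (fun s => (f s).2) := by
        filter_upwards [isOpen_Ioi.mem_nhds (show t₁ < t by linarith)] with s hs
        by_cases h's : s < tmax
        · rw [if_pos h's]
          exact (congrArg Prod.snd (hEq s ⟨hs.le, h's⟩)).symm
        · rw [if_neg h's]
      have hv1 : (V (f t)).1 = -16*α*(f t).1/((f t).2)^2 := by rw [hVdef]
      have hv2 : (V (f t)).2 = 8 - 16*α/((f t).2) := by rw [hVdef]
      refine ⟨?_, ?_, ?_, ?_⟩
      · simp only [if_neg hnlt]; exact hpos.1
      · simp only [if_neg hnlt]; exact hpos.2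
      · simp only [if_neg hnlt]
        have h1 := hasDerivAt_fst_comp' hfdt
        rw [hv1] at h1
        exact h1.congr_of_eventuallyEq heA
      · simp only [if_neg hnlt]
        have h1 := hasDerivAt_snd_comp' hfdt
        rw [hv2] at h1
        exact h1.congr_of_eventuallyEq heB
  have hBtend0 : Tendsto B (𝓝[<] tmax) (𝓝 0) := hLzero ▸ hBtendL
  -- quantitative decay of B
  have hu : ∀ t ∈ Ico (0:ℝ) tmax, (B t)^2 ≤ 32*α*(tmax - t) := by
    have hud : ∀ x ∈ Ioo (0:ℝ) tmax,
        HasDerivAt (fun t => (B t)^2 + 32*α*t) (16*(B x)) x := by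
      intro x hx
      have hxI := hmem x hx
      have hBx := hBpos x hxI
      have h1 : HasDerivAt (fun t => (B t)^2) (2*(B x)*(8-16*α/(B x))) x := by
        have := (hBd x hxI).fun_pow 2
        refine this.congr_deriv ?_
        push_cast
        ring
      have h2 : HasDerivAt (fun t : ℝ => 32*α*t) (32*α) x := by
        simpa using (hasDerivAt_id x).const_mul (32*α)
      have h3 := h1.fun_add h2
      refine h3.congr_deriv ?_
      field_simp
      ring
    have humono : MonotoneOn (fun t => (B t)^2 + 32*α*t) (Ico (0:ℝ) tmax) := by
      apply monotoneOn_of_deriv_nonneg (convex_Ico _ _)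
      · exact (contB.pow 2).add (Continuous.continuousOn (by fun_prop))
      · intro x hx
        rw [interior_Ico] at hx
        exact (hud x hx).differentiableAt.differentiableWithinAt
      · intro x hx
        rw [interior_Ico] at hx
        rw [(hud x hx).deriv]
        have := hBpos x (hmem x hx)
        positivity
    have hulim : Tendsto (fun t => (B t)^2 + 32*α*t) (𝓝[<] tmax) (𝓝 (32*α*tmax)) := by
      have h1 : Tendsto (fun t => (B t)^2) (𝓝[<] tmax) (𝓝 0) := by
        have := hBtend0.mul hBtend0
        simpa [pow_two] using this
      have h2 : Tendsto (fun t : ℝ => 32*α*t) (𝓝[<] tmax) (𝓝 (32*α*tmax)) :=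
        ((Continuous.tendsto (by fun_prop) tmax)).mono_left nhdsWithin_le_nhds
      simpa using h1.add h2
    intro t ht
    have hev : ∀ᶠ s in 𝓝[<] tmax, (B t)^2 + 32*α*t ≤ (B s)^2 + 32*α*s := by
      filter_upwards [Ioo_mem_nhdsLT_of_mem (⟨ht.2, le_refl tmax⟩ : tmax ∈ Ioc t tmax)] with s hs
      exact humono ht ⟨ht.1.trans hs.1.le, hs.2⟩ hs.1.le
    have := ge_of_tendsto hulim hev
    linarith
  -- quantitative decay of A
  have hAb : ∀ t ∈ Ico (0:ℝ) tmax, (A t)^2*(tmax - t)⁻¹ ≤ A₀^2 * tmax⁻¹ := by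
    have hWd : ∀ x ∈ Ioo (0:ℝ) tmax, HasDerivAt (fun t => (A t)^2*(tmax - t)⁻¹)
        (2*(A x)*(-16*α*(A x)/(B x)^2)*(tmax - x)⁻¹ + (A x)^2*((tmax - x)^2)⁻¹) x := by
      intro x hx
      have hxI := hmem x hx
      have hne : tmax - x ≠ 0 := sub_ne_zero.mpr (ne_of_gt hx.2)
      have h1 : HasDerivAt (fun t => (A t)^2) (2*(A x)*(-16*α*(A x)/(B x)^2)) x := by
        have := (hAd x hxI).fun_pow 2
        refine this.congr_deriv ?_
        push_cast
        ring
      have h0 : HasDerivAt (fun t : ℝ => tmax - t) (-1) x := by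
        simpa using (hasDerivAt_id x).const_sub tmax
      have h2 : HasDerivAt (fun t : ℝ => (tmax - t)⁻¹) (((tmax - x)^2)⁻¹) x := by
        have := h0.fun_inv hne
        refine this.congr_deriv ?_
        field_simp
      exact h1.mul h2
    have hWanti : AntitoneOn (fun t => (A t)^2*(tmax - t)⁻¹) (Ico (0:ℝ) tmax) := by
      apply antitoneOn_of_deriv_nonpos (convex_Ico _ _)
      · apply (contA.pow 2).mul
        apply ContinuousOn.inv₀ (Continuous.continuousOn (by fun_prop))
        intro x hx
        exact sub_ne_zero.mpr (ne_of_gt hx.2)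
      · intro x hx
        rw [interior_Ico] at hx
        exact (hWd x hx).differentiableAt.differentiableWithinAt
      · intro x hx
        rw [interior_Ico] at hx
        rw [(hWd x hx).deriv]
        have hxI := hmem x hx
        have hAx := hApos x hxI
        have hBx := hBpos x hxI
        have hs : (0:ℝ) < tmax - x := by linarith [hx.2]
        have key := hu x hxI
        have e1 : -16*α*(A x)/(B x)^2 ≤ -(A x)/(2*(tmax - x)) := by
          rw [div_le_div_iff₀ (by positivity) (by positivity)]
          nlinarith
        have e2 : 2*(A x)*(-16*α*(A x)/(B x)^2)*(tmax - x)⁻¹ ≤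
            2*(A x)*(-(A x)/(2*(tmax - x)))*(tmax - x)⁻¹ := by
          apply mul_le_mul_of_nonneg_right _ (by positivity)
          apply mul_le_mul_of_nonneg_left e1 (by positivity)
        have e3 : 2*(A x)*(-(A x)/(2*(tmax - x)))*(tmax - x)⁻¹ + (A x)^2*((tmax - x)^2)⁻¹ = 0 := by
          field_simp
          ring
        linarith
    intro t ht
    have := hWanti h0mem ht ht.1
    simpa [hA0] using this
  -- squeeze for A
  have hsqA : Tendsto A (𝓝[<] tmax) (𝓝 0) := by
    have hupper : Tendsto (fun t => Real.sqrt (A₀^2*tmax⁻¹*(tmax - t))) (𝓝[<] tmax) (𝓝 0) := by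
      have hcont : Continuous (fun t : ℝ => Real.sqrt (A₀^2*tmax⁻¹*(tmax - t))) := by fun_prop
      have := (hcont.tendsto tmax).mono_left (nhdsWithin_le_nhds (s := Iio tmax))
      simpa using this
    apply tendsto_of_tendsto_of_tendsto_of_le_of_le' tendsto_const_nhds hupper
    · filter_upwards [Ioo_mem_nhdsLT_of_mem (⟨htmax, le_refl tmax⟩ : tmax ∈ Ioc 0 tmax)] with s hs
      exact (hApos s (hmem s hs)).le
    · filter_upwards [Ioo_mem_nhdsLT_of_mem (⟨htmax, le_refl tmax⟩ : tmax ∈ Ioc 0 tmax)] with s hs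
      have hsI := hmem s hs
      have h2 : (0:ℝ) < tmax - s := by linarith [hs.2]
      have h1 : (A s)^2 ≤ A₀^2*tmax⁻¹*(tmax - s) := by
        have h3 := hAb s hsI
        calc (A s)^2 = (A s)^2*(tmax - s)⁻¹*(tmax - s) := by field_simp
        _ ≤ A₀^2*tmax⁻¹*(tmax - s) := mul_le_mul_of_nonneg_right h3 h2.le
      calc A s = Real.sqrt ((A s)^2) := (Real.sqrt_sq (hApos s hsI).le).symm
      _ ≤ _ := Real.sqrt_le_sqrt h1
  -- squeeze for B
  have hsqB : Tendsto B (𝓝[<] tmax) (𝓝 0) := hBtend0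
  exact ⟨hBanti, hpart2, hsqA, hsqB⟩
end
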